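/- arXiv:1611.01096 — 3 statements merged into one kernel-verified Lean document; each statement's English description precedes it below -/
import Mathlib

section
/- Under the DCSBM setup, almost surely max_{1≤i≤n} |q_i − d_i/√(d^T 1_n)| → 0 as n → ∞, where d = A^{(n)} 1_n is the degree vector; i.e. the quantities q̂_i = d_i/√(Σ_{j,k} A^{(n)}_{jk}) are uniformly consistent estimators of the intrinsic weights q_i. -/
open MeasureTheory ProbabilityTheory Filter Matrix
open scoped ENNReal NNReal Classical BigOperators

noncomputable section

/-- The ℓ²→ℓ² operator norm of a real square matrix. -/
noncomputable def matOpNorm {n : ℕ} (B : Matrix (Fin n) (Fin n) ℝ) : ℝ :=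
  ‖LinearMap.toContinuousLinearMap (Matrix.toEuclideanLin B)‖

/-- The eigenvalues of a real square matrix (those of its self-adjoint part if it is symmetric,
junk value `0` otherwise). -/
noncomputable def eigs {n : ℕ} (B : Matrix (Fin n) (Fin n) ℝ) : Fin n → ℝ :=
  if h : B.IsHermitian then h.eigenvalues else fun _ => 0

/-- The empirical spectral distribution of a real symmetric matrix. -/
noncomputable def specMeasure {n : ℕ} (B : Matrix (Fin n) (Fin n) ℝ) : Measure ℝ :=
  ((n : ℝ≥0∞))⁻¹ • ∑ i : Fin n, Measure.dirac (eigs B i)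

/-- Support of a measure on ℝ. -/
def mSupp (ν : Measure ℝ) : Set ℝ := {x : ℝ | ∀ U ∈ nhds x, ν U ≠ 0}

/-- Denominator appearing in the fixed-point system characterizing the limiting
Stieltjes transform. -/
noncomputable def denomC (α : ℝ) (z E1 E2 : ℂ) (q : ℝ) : ℂ :=
  -z - E1 * ((q ^ (1 - 2*α) : ℝ) : ℂ) + E2 * ((q ^ (2 - 2*α) : ℝ) : ℂ)

/-- The fixed-point system at `z ∈ ℂ⁺` : `(E1, E2) ∈ (ℂ⁺)²`,
`E1 = ∫ q^{1−2α}/(−z − E1 q^{1−2α} + E2 q^{2−2α}) dμ(q)` and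
`E2 = ∫ q^{2−2α}/(−z − E1 q^{1−2α} + E2 q^{2−2α}) dμ(q)`,
with μ-a.e. nonzero denominators. -/
def IsFixedPoint (α : ℝ) (μ : Measure ℝ) (z E1 E2 : ℂ) : Prop :=
  0 < E1.im ∧ 0 < E2.im ∧ (∀ᵐ q ∂μ, denomC α z E1 E2 q ≠ 0) ∧
  E1 = ∫ q, ((q ^ (1 - 2*α) : ℝ) : ℂ) / denomC α z E1 E2 q ∂μ ∧
  E2 = ∫ q, ((q ^ (2 - 2*α) : ℝ) : ℂ) / denomC α z E1 E2 q ∂μ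

/-- The Degree-Corrected Stochastic Block Model (DCSBM) setup: `K ≥ 1` classes with
limiting proportions `c` and symmetric affinity matrix `M`, i.i.d. intrinsic weights
`(q_i)` with compactly supported law `μ ⊆ (0,1)`, and (built from auxiliary i.i.d.
uniform variables `ξ_{ij}` independent of the weights) a symmetric adjacency matrix with
zero diagonal whose entries are, conditionally on the weights, independent Bernoulli
with parameters `P_{ij} = q_i q_j (1 + M_{g(i)g(j)}/√n) ∈ (0,1)`. -/
structure DCSBM (Ω : Type*) [MeasurableSpace Ω] where
  /-- number of classes -/
  K : ℕ
  hK : 1 ≤ K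
  /-- law of the intrinsic weights -/
  μ : Measure ℝ
  hμ_prob : IsProbabilityMeasure μ
  /-- a compact set carrying μ -/
  suppSet : Set ℝ
  h_supp_compact : IsCompact suppSet
  h_supp_sub : suppSet ⊆ Set.Ioo 0 1
  h_supp_full : μ suppSetᶜ = 0
  /-- limiting class proportions -/
  c : Fin K → ℝ
  hc_pos : ∀ k, 0 < c k
  hc_sum : ∑ k, c k = 1
  /-- class affinity matrix -/
  M : Matrix (Fin K) (Fin K) ℝ
  hM_symm : M.IsSymm
  /-- class assignment -/
  g : ℕ → Fin K
  hg : ∀ k, Filter.Tendsto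
      (fun n => (((Finset.range n).filter (fun i => g i = k)).card : ℝ) / n)
      Filter.atTop (nhds (c k))
  /-- probability measure of the underlying space -/
  P : Measure Ω
  hP : IsProbabilityMeasure P
  /-- intrinsic weights -/
  q : ℕ → Ω → ℝ
  hq_meas : ∀ i, Measurable (q i)
  /-- auxiliary i.i.d. uniform variables generating the conditionally Bernoulli edges -/
  ξ : ℕ → ℕ → Ω → ℝ
  hξ_meas : ∀ i j, Measurable (ξ i j)
  h_indep : iIndepFun
      (Sum.elim q fun p : ℕ × ℕ => ξ p.1 p.2 : ℕ ⊕ ℕ × ℕ → Ω → ℝ) P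
  h_q_law : ∀ i, P.map (q i) = μ
  h_ξ_law : ∀ i j, P.map (ξ i j) = volume.restrict (Set.Icc (0:ℝ) 1)
  h_P_range : ∀ n i j : ℕ, i ≠ j →
      ∀ᵐ ω ∂P, 0 < q i ω * q j ω * (1 + M (g i) (g j) / Real.sqrt n) ∧
        q i ω * q j ω * (1 + M (g i) (g j) / Real.sqrt n) < 1

namespace DCSBM

variable {Ω : Type*} [MeasurableSpace Ω] (S : DCSBM Ω)

/-- Bernoulli parameter `P_{ij} = q_i q_j (1 + M_{g(i)g(j)}/√n)`. -/
noncomputable def Pber (n i j : ℕ) (ω : Ω) : ℝ :=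
  S.q i ω * S.q j ω * (1 + S.M (S.g i) (S.g j) / Real.sqrt n)

/-- The adjacency matrix of the DCSBM graph on `n` vertices: symmetric, zero diagonal,
with entries `A_{ij} = 1_{ξ_{ij} ≤ P_{ij}}` for `i < j`, so that conditionally on the
weights the entries are independent Bernoulli(`P_{ij}`). -/
noncomputable def A (n : ℕ) (ω : Ω) : Matrix (Fin n) (Fin n) ℝ :=
  Matrix.of fun i j =>
    if (i : ℕ) < (j : ℕ) then (if S.ξ i j ω ≤ S.Pber n i j ω then 1 else 0)
    else if (j : ℕ) < (i : ℕ) then (if S.ξ j i ω ≤ S.Pber n j i ω then 1 else 0)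
    else 0

/-- Degree vector `d = A 1_n`. -/
noncomputable def deg (n : ℕ) (ω : Ω) (i : Fin n) : ℝ := ∑ j, S.A n ω i j

/-- The normalized modularity-type matrix
`L_α = (2m)^α n^{-1/2} D^{-α} (A - d dᵀ/(2m)) D^{-α}`. -/
noncomputable def L (α : ℝ) (n : ℕ) (ω : Ω) : Matrix (Fin n) (Fin n) ℝ :=
  ((∑ i, S.deg n ω i) ^ α / Real.sqrt n) •
    (Matrix.diagonal (fun i => S.deg n ω i ^ (-α)) *
      (S.A n ω - (∑ i, S.deg n ω i)⁻¹ • Matrix.vecMulVec (S.deg n ω) (S.deg n ω)) *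
      Matrix.diagonal (fun i => S.deg n ω i ^ (-α)))

/-- Centered adjacency matrix `X = A − E[A | q]`. -/
noncomputable def Xc (n : ℕ) (ω : Ω) : Matrix (Fin n) (Fin n) ℝ :=
  Matrix.of fun i j => if i = j then 0 else S.A n ω i j - S.Pber n i j ω

end DCSBM


namespace DCSBMAux

open Real



variable {Ω : Type*} [MeasurableSpace Ω] {μ : Measure Ω}

/-- Reindexing an independent family along an injective map. -/
lemma iIndepFun_comp_right {ι ι' : Type*} [Nonempty ι'] (u : ι' → ι)
    (hu : Function.Injective u) {f : ι → Ω → ℝ}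
    (h : iIndepFun f μ) :
    iIndepFun (fun i => f (u i)) μ := by
  rw [iIndepFun_iff_measure_inter_preimage_eq_mul] at h ⊢
  intro s sets hsets
  classical
  have key := h (s.map ⟨u, hu⟩) (sets := fun i => sets (Function.invFun u i)) ?_
  · have hinv : ∀ j : ι', Function.invFun u (u j) = j := fun j =>
      Function.leftInverse_invFun hu j
    convert key using 1
    · congr 1
      ext ω
      simp only [Set.mem_iInter, Finset.mem_map, Finset.mem_coe]
      constructor
      · rintro hx i ⟨j, hj, rfl⟩
        simpa [hinv j] using hx j hj
      · intro hx j hj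
        have := hx (u j) ⟨j, hj, rfl⟩
        simpa [hinv j] using this
    · rw [Finset.prod_map]
      apply Finset.prod_congr rfl
      intro j _
      simp [hinv j]
  · intro i hi
    simp only [Finset.mem_map, Finset.mem_coe] at hi
    obtain ⟨j, hj, rfl⟩ := hi
    have hinv : Function.invFun u (u j) = j := Function.leftInverse_invFun hu j
    simpa [hinv] using hsets j hj

/-- The joint law of a finite independent family is the product of the marginals. -/
lemma map_fun_eq_pi {ι : Type*} [Fintype ι] {f : ι → Ω → ℝ}
    (hm : ∀ i, Measurable (f i))
    (h : iIndepFun f μ) :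
    μ.map (fun ω i => f i ω) = Measure.pi (fun i => μ.map (f i)) := by
  haveI : IsProbabilityMeasure μ := h.isProbabilityMeasure
  haveI : ∀ i, IsProbabilityMeasure (μ.map (f i)) := fun i =>
    Measure.isProbabilityMeasure_map (hm i).aemeasurable
  refine (Measure.pi_eq fun s hs => ?_).symm
  rw [Measure.map_apply (measurable_pi_lambda _ hm) (MeasurableSet.univ_pi hs)]
  have hpre : (fun ω i => f i ω) ⁻¹' (Set.univ.pi s) = ⋂ i, f i ⁻¹' s i := by
    ext ω; simp [Set.mem_pi]
  rw [hpre, h.meas_iInter fun i => ⟨s i, hs i, rfl⟩]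
  exact Finset.prod_congr rfl fun i _ =>
    (Measure.map_apply (hm i) (hs i)).symm

/-- Coordinates of a finite product of probability measures are independent. -/
lemma iIndepFun_eval_pi {ι : Type*} [Fintype ι] (ν : ι → Measure ℝ)
    [∀ i, IsProbabilityMeasure (ν i)] :
    iIndepFun
      (fun i (x : ι → ℝ) => x i) (Measure.pi ν) := by
  rw [iIndepFun_iff_measure_inter_preimage_eq_mul]
  intro s sets hsets
  classical
  have h1 : (⋂ i ∈ s, (fun (x : ι → ℝ) => x i) ⁻¹' sets i)
      = Set.univ.pi (fun i => if i ∈ s then sets i else Set.univ) := by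
    ext x
    simp only [Set.mem_iInter, Set.mem_preimage, Set.mem_pi, Set.mem_univ, true_implies]
    constructor
    · intro hx i; split_ifs with hi
      · exact hx i hi
      · trivial
    · intro hx i hi; have := hx i; rwa [if_pos hi] at this
  rw [h1, Measure.pi_pi]
  have h2 : ∀ i, ν i (if i ∈ s then sets i else Set.univ) = if i ∈ s then ν i (sets i) else 1 := by
    intro i; split_ifs <;> simp
  simp_rw [h2]
  rw [Finset.prod_ite_mem Finset.univ s (fun i => ν i (sets i))]
  · rw [Finset.univ_inter]
    apply Finset.prod_congr rfl
    intro i hi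
    have : (fun (x : ι → ℝ) => x i) ⁻¹' (sets i)
        = Set.univ.pi (fun j => if j = i then sets i else Set.univ) := by
      ext x
      simp only [Set.mem_preimage, Set.mem_pi, Set.mem_univ, true_implies]
      constructor
      · intro hx j; split_ifs with hj
        · subst hj; exact hx
        · trivial
      · intro hx; have := hx i; rwa [if_pos rfl] at this
    rw [this, Measure.pi_pi]
    rw [Finset.prod_eq_single i (fun j _ hj => by rw [if_neg hj]; simp) (by simp)]
    rw [if_pos rfl]

/-- Measure of a coordinate preimage under a product of probability measures. -/
lemma pi_eval_preimage {ι : Type*} [Fintype ι] (ν : ι → Measure ℝ)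
    [∀ i, IsProbabilityMeasure (ν i)] (i : ι) {A : Set ℝ} (hA : MeasurableSet A) :
    Measure.pi ν ((fun x => x i) ⁻¹' A) = ν i A := by
  classical
  have : (fun (x : ι → ℝ) => x i) ⁻¹' A
      = Set.univ.pi (fun j => if j = i then A else Set.univ) := by
    ext x
    simp only [Set.mem_preimage, Set.mem_pi, Set.mem_univ, true_implies]
    constructor
    · intro hx j; split_ifs with hj
      · subst hj; exact hx
      · trivial
    · intro hx; have := hx i; rwa [if_pos rfl] at this
  rw [this, Measure.pi_pi,
    Finset.prod_eq_single i (fun j _ hj => by rw [if_neg hj]; simp) (by simp), if_pos rfl]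


variable {Ψ : Type*} [MeasurableSpace Ψ] {ν : Measure Ψ}

lemma integrable_of_bounded [IsProbabilityMeasure ν] {f : Ψ → ℝ} (hf : Measurable f)
    {C : ℝ} (hC : ∀ y, |f y| ≤ C) : Integrable f ν := by
  refine (integrable_const C).mono' hf.aestronglyMeasurable ?_
  exact Filter.Eventually.of_forall fun y => by simpa using hC y

/-- mgf bound for a centered random variable bounded by 1, for |t| ≤ 1. -/
lemma mgf_le_of_bounded [IsProbabilityMeasure ν] {W : Ψ → ℝ} (hW : Measurable W)
    (hb : ∀ y, |W y| ≤ 1) (h0 : ∫ y, W y ∂ν = 0) {t : ℝ} (ht : |t| ≤ 1) :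
    mgf W ν t ≤ exp (3 / 4 * t ^ 2) := by
  have hWsq : ∀ y, (W y) ^ 2 ≤ 1 := by
    intro y
    have h1 := (abs_le.mp (hb y)).1
    have h2 := (abs_le.mp (hb y)).2
    nlinarith
  have hpt : ∀ y, exp (t * W y) ≤ 1 + t * W y + 3 / 4 * t ^ 2 * (W y) ^ 2 := by
    intro y
    have htw : |t * W y| ≤ 1 := by
      rw [abs_mul]
      exact mul_le_one₀ ht (abs_nonneg _) (hb y)
    have hB := Real.exp_bound htw (by norm_num : 0 < 2)
    have hsum : ∑ i ∈ Finset.range 2, (t * W y) ^ i / (Nat.factorial i) = 1 + t * W y := by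
      simp [Finset.sum_range_succ]
    rw [hsum, sq_abs] at hB
    norm_num [Nat.factorial] at hB
    have := (abs_le.mp hB).2
    nlinarith [sq_nonneg (W y), sq_nonneg t]
  have hint_exp : Integrable (fun y => exp (t * W y)) ν := by
    refine integrable_of_bounded ((hW.const_mul t).exp) (C := exp 1) fun y => ?_
    rw [abs_of_pos (exp_pos _)]
    apply exp_le_exp.2
    calc t * W y ≤ |t * W y| := le_abs_self _
      _ ≤ 1 := by rw [abs_mul]; exact mul_le_one₀ ht (abs_nonneg _) (hb y)
  have hintW : Integrable W ν := integrable_of_bounded hW hb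
  have hintW2 : Integrable (fun y => (W y) ^ 2) ν := by
    refine integrable_of_bounded (hW.pow_const 2) (C := 1) fun y => ?_
    rw [abs_of_nonneg (sq_nonneg _)]
    exact hWsq y
  have hEW2 : ∫ y, (W y) ^ 2 ∂ν ≤ 1 := by
    calc ∫ y, (W y) ^ 2 ∂ν ≤ ∫ _, (1 : ℝ) ∂ν :=
          integral_mono hintW2 (integrable_const 1) hWsq
      _ = 1 := by simp
  have hEW2' : 0 ≤ ∫ y, (W y) ^ 2 ∂ν := integral_nonneg fun y => sq_nonneg _
  have step : mgf W ν t ≤ 1 + 3 / 4 * t ^ 2 * ∫ y, (W y) ^ 2 ∂ν := by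
    have h1 : mgf W ν t ≤ ∫ y, (1 + t * W y + 3 / 4 * t ^ 2 * (W y) ^ 2) ∂ν := by
      refine integral_mono hint_exp ?_ hpt
      exact ((integrable_const 1).add (hintW.const_mul t)).add (hintW2.const_mul _)
    have e1 : Integrable (fun y => 1 + t * W y) ν := by
      exact (integrable_const 1).add (hintW.const_mul t)
    have e0 : Integrable (fun y => t * W y) ν := hintW.const_mul t
    have e2 : Integrable (fun y => 3 / 4 * t ^ 2 * (W y) ^ 2) ν := hintW2.const_mul _
    have h2 : ∫ y, (1 + t * W y + 3 / 4 * t ^ 2 * (W y) ^ 2) ∂ν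
        = 1 + 3 / 4 * t ^ 2 * ∫ y, (W y) ^ 2 ∂ν := by
      rw [integral_add e1 e2, integral_add (integrable_const 1) e0,
        integral_const, integral_const_mul, integral_const_mul, h0]
      simp
    linarith [h1, h2.le, h2.ge]
  calc mgf W ν t ≤ 1 + 3 / 4 * t ^ 2 * ∫ y, (W y) ^ 2 ∂ν := step
    _ ≤ 1 + 3 / 4 * t ^ 2 := by nlinarith [sq_nonneg t]
    _ ≤ exp (3 / 4 * t ^ 2) := by
        have := Real.add_one_le_exp (3 / 4 * t ^ 2)
        linarith

/-- Chernoff-type bound for sums of independent, centered variables bounded by 1. -/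
lemma chernoff_sum {ι : Type*} [IsProbabilityMeasure ν] {W : ι → Ψ → ℝ}
    (hind : iIndepFun W ν)
    (hmeas : ∀ j, Measurable (W j)) (s : Finset ι)
    (hb : ∀ j ∈ s, ∀ y, |W j y| ≤ 1) (h0 : ∀ j ∈ s, ∫ y, W j y ∂ν = 0)
    {ε : ℝ} (hε : 0 < ε) (hε1 : ε ≤ 1) {N : ℕ} (hcard : s.card ≤ N) :
    ν {y | ε * N ≤ |∑ j ∈ s, W j y|} ≤ ENNReal.ofReal (2 * exp (-(ε ^ 2 * N) / 4)) := by
  classical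
  have hsetZ : True := trivial
  set Z : Ψ → ℝ := ∑ j ∈ s, W j with hZ
  have hZapp : ∀ y, Z y = ∑ j ∈ s, W j y := fun y => by
    rw [hZ, Finset.sum_apply]
  have hZmeas : Measurable Z := by
    have h : Measurable (fun y => ∑ j ∈ s, W j y) := Finset.measurable_sum s fun j _ => hmeas j
    have he : Z = fun y => ∑ j ∈ s, W j y := funext hZapp
    rw [he]
    exact h
  have hint : ∀ t : ℝ, Integrable (fun y => exp (t * Z y)) ν := by
    intro t
    refine integrable_of_bounded ((hZmeas.const_mul t).exp) (C := exp (|t| * s.card)) fun y => ?_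
    rw [abs_of_pos (exp_pos _)]
    apply exp_le_exp.2
    calc t * Z y ≤ |t * Z y| := le_abs_self _
      _ = |t| * |Z y| := abs_mul _ _
      _ ≤ |t| * s.card := by
          apply mul_le_mul_of_nonneg_left _ (abs_nonneg t)
          rw [hZapp]
          calc |∑ j ∈ s, W j y| ≤ ∑ j ∈ s, |W j y| := Finset.abs_sum_le_sum_abs _ _
            _ ≤ ∑ j ∈ s, 1 := Finset.sum_le_sum fun j hj => hb j hj y
            _ = s.card := by simp
  have hmgf : ∀ t : ℝ, |t| ≤ 1 → mgf Z ν t ≤ exp (3 / 4 * t ^ 2 * N) := by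
    intro t ht
    rw [hZ, hind.mgf_sum hmeas s]
    calc ∏ j ∈ s, mgf (W j) ν t ≤ ∏ j ∈ s, exp (3 / 4 * t ^ 2) := by
          apply Finset.prod_le_prod (fun j _ => mgf_nonneg)
          intro j hj
          exact mgf_le_of_bounded (hmeas j) (hb j hj) (h0 j hj) ht
      _ = exp (3 / 4 * t ^ 2 * s.card) := by
          rw [← Real.exp_sum]
          congr 1
          rw [Finset.sum_const, nsmul_eq_mul]
          ring
      _ ≤ exp (3 / 4 * t ^ 2 * N) := by
          apply exp_le_exp.2
          apply mul_le_mul_of_nonneg_left _ (by positivity)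
          exact_mod_cast hcard
  -- upper tail
  have htail : ∀ (c : ℝ), c = ε * N → (ν {y | c ≤ Z y}).toReal ≤ exp (-(ε ^ 2 * N) / 4) ∧
      (ν {y | Z y ≤ -c}).toReal ≤ exp (-(ε ^ 2 * N) / 4) := by
    intro c hc
    have ht2 : |(ε / 2 : ℝ)| ≤ 1 := by rw [abs_of_pos (by linarith)]; linarith
    have hexp : -(ε/2) * c + 3 / 4 * (ε/2) ^ 2 * N ≤ -(ε ^ 2 * N) / 4 := by
      rw [hc]
      have hN : (0:ℝ) ≤ N := Nat.cast_nonneg N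
      nlinarith [sq_nonneg ε, mul_nonneg (sq_nonneg ε) hN]
    constructor
    · have h1 := measure_ge_le_exp_mul_mgf (X := Z) (μ := ν) (t := ε/2) c (by linarith) (hint _)
      refine h1.trans ?_
      calc exp (-(ε/2) * c) * mgf Z ν (ε/2) ≤ exp (-(ε/2) * c) * exp (3 / 4 * (ε/2) ^ 2 * N) := by
            exact mul_le_mul_of_nonneg_left (hmgf _ ht2) (exp_pos _).le
        _ = exp (-(ε/2) * c + 3 / 4 * (ε/2) ^ 2 * N) := by rw [← Real.exp_add]
        _ ≤ _ := exp_le_exp.2 hexp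
    · have h1 := measure_le_le_exp_mul_mgf (X := Z) (μ := ν) (t := -(ε/2)) (-c) (by linarith) (hint _)
      refine h1.trans ?_
      have ht2' : |(-(ε/2) : ℝ)| ≤ 1 := by rwa [abs_neg]
      calc exp (-(-(ε/2)) * -c) * mgf Z ν (-(ε/2))
          ≤ exp (-(ε/2) * c) * exp (3 / 4 * (ε/2) ^ 2 * N) := by
            have : (-(-(ε/2) : ℝ)) * -c = -(ε/2) * c := by ring
            rw [this]
            refine mul_le_mul_of_nonneg_left ?_ (exp_pos _).le
            have := hmgf _ ht2'
            simpa [neg_sq] using this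
        _ = exp (-(ε/2) * c + 3 / 4 * (ε/2) ^ 2 * N) := by rw [← Real.exp_add]
        _ ≤ _ := exp_le_exp.2 hexp
  obtain ⟨hu, hl⟩ := htail (ε * N) rfl
  have hseteq : {y | ε * ↑N ≤ |∑ j ∈ s, W j y|} = {y | ε * ↑N ≤ |Z y|} := by
    ext y; rw [Set.mem_setOf_eq, Set.mem_setOf_eq, hZapp]
  rw [hseteq]
  have hsub : {y | ε * ↑N ≤ |Z y|} ⊆ {y | ε * ↑N ≤ Z y} ∪ {y | Z y ≤ -(ε * ↑N)} := by
    intro y hy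
    rw [Set.mem_setOf_eq] at hy
    rcases le_abs.mp hy with h | h
    · exact Or.inl h
    · exact Or.inr (by simp only [Set.mem_setOf_eq]; linarith)
  calc ν {y | ε * ↑N ≤ |Z y|} ≤ ν ({y | ε * ↑N ≤ Z y} ∪ {y | Z y ≤ -(ε * ↑N)}) :=
        measure_mono hsub
    _ ≤ ν {y | ε * N ≤ Z y} + ν {y | Z y ≤ -(ε * N)} := measure_union_le _ _
    _ ≤ ENNReal.ofReal (exp (-(ε ^ 2 * N) / 4)) + ENNReal.ofReal (exp (-(ε ^ 2 * N) / 4)) := by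
        gcongr
        · exact (ENNReal.le_ofReal_iff_toReal_le (measure_ne_top _ _) (exp_pos _).le).2 hu
        · exact (ENNReal.le_ofReal_iff_toReal_le (measure_ne_top _ _) (exp_pos _).le).2 hl
    _ = ENNReal.ofReal (2 * exp (-(ε ^ 2 * N) / 4)) := by
        rw [← ENNReal.ofReal_add (exp_pos _).le (exp_pos _).le]
        congr 1; ring

variable {Ω : Type*} [MeasurableSpace Ω] (S : DCSBM Ω)

/-- Uniform measure on [0,1]. -/
def unif : Measure ℝ := volume.restrict (Set.Icc (0:ℝ) 1)

instance : IsProbabilityMeasure unif :=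
  ⟨by rw [unif, Measure.restrict_apply_univ, Real.volume_Icc]; norm_num⟩

lemma unif_Iic {p : ℝ} (h0 : 0 ≤ p) (h1 : p ≤ 1) : unif (Set.Iic p) = ENNReal.ofReal p := by
  rw [unif, Measure.restrict_apply measurableSet_Iic]
  have h : Set.Iic p ∩ Set.Icc 0 1 = Set.Icc 0 p := by
    ext x
    simp only [Set.mem_inter_iff, Set.mem_Iic, Set.mem_Icc]
    constructor
    · rintro ⟨hx, hx0, _⟩; exact ⟨hx0, hx⟩
    · rintro ⟨hx0, hx⟩; exact ⟨hx, hx0, hx.trans h1⟩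
  rw [h, Real.volume_Icc, sub_zero]

lemma measurable_X (n : ℕ) : Measurable (fun ω (i : Fin n) => S.q i ω) :=
  measurable_pi_lambda _ fun i => S.hq_meas i

lemma measurable_Y (n : ℕ) : Measurable (fun ω (p : Fin n × Fin n) => S.ξ p.1 p.2 ω) :=
  measurable_pi_lambda _ fun p => S.hξ_meas p.1 p.2

lemma jointLaw (n : ℕ) (hn : 0 < n) :
    S.P.map (fun ω => ((fun i : Fin n => S.q i ω), (fun p : Fin n × Fin n => S.ξ p.1 p.2 ω)))
      = (Measure.pi fun _ : Fin n => S.μ).prod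
          (Measure.pi fun _ : Fin n × Fin n => unif) := by
  haveI : Nonempty (Fin n) := Fin.pos_iff_nonempty.mp hn
  haveI : IsProbabilityMeasure S.P := S.hP
  set f : (ℕ ⊕ ℕ × ℕ) → Ω → ℝ := Sum.elim S.q fun p => S.ξ p.1 p.2 with hf
  have hfmeas : ∀ i, Measurable (f i) := by
    rintro (i | p)
    · exact S.hq_meas i
    · exact S.hξ_meas p.1 p.2
  -- law of the q-part
  have hqind : iIndepFun
      (fun i : Fin n => S.q (i : ℕ)) S.P := by
    have hinj : Function.Injective (fun i : Fin n => (Sum.inl (i:ℕ) : ℕ ⊕ ℕ × ℕ)) := by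
      intro i j h
      simpa [Fin.val_injective.eq_iff] using h
    exact iIndepFun_comp_right _ hinj S.h_indep
  have hXlaw : S.P.map (fun ω (i : Fin n) => S.q i ω) = Measure.pi (fun _ : Fin n => S.μ) := by
    rw [map_fun_eq_pi (fun i : Fin n => S.hq_meas i) hqind]
    congr 1
    funext i
    exact S.h_q_law i
  -- law of the ξ-part
  have hξind : iIndepFun
      (fun p : Fin n × Fin n => S.ξ p.1 p.2) S.P := by
    have hinj : Function.Injective
        (fun p : Fin n × Fin n => (Sum.inr ((p.1:ℕ), (p.2:ℕ)) : ℕ ⊕ ℕ × ℕ)) := by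
      intro p q h
      simp only [Sum.inr.injEq, Prod.mk.injEq] at h
      exact Prod.ext (Fin.val_injective h.1) (Fin.val_injective h.2)
    exact iIndepFun_comp_right _ hinj S.h_indep
  have hYlaw : S.P.map (fun ω (p : Fin n × Fin n) => S.ξ p.1 p.2 ω)
      = Measure.pi (fun _ : Fin n × Fin n => unif) := by
    rw [map_fun_eq_pi (fun p : Fin n × Fin n => S.hξ_meas p.1 p.2) hξind]
    congr 1
    funext p
    exact S.h_ξ_law p.1 p.2
  -- independence of the two groups
  set S₁ : Finset (ℕ ⊕ ℕ × ℕ) :=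
    Finset.univ.image (fun i : Fin n => (Sum.inl (i:ℕ) : ℕ ⊕ ℕ × ℕ)) with hS₁
  set S₂ : Finset (ℕ ⊕ ℕ × ℕ) :=
    Finset.univ.image (fun p : Fin n × Fin n => (Sum.inr ((p.1:ℕ),(p.2:ℕ)) : ℕ ⊕ ℕ × ℕ)) with hS₂
  have hd : Disjoint S₁ S₂ := by
    rw [Finset.disjoint_left]
    intro x hx hx'
    rw [hS₁, Finset.mem_image] at hx
    rw [hS₂, Finset.mem_image] at hx'
    obtain ⟨i, _, rfl⟩ := hx
    obtain ⟨p, _, h⟩ := hx'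
    exact Sum.inr_ne_inl h
  have hgrp := ProbabilityTheory.iIndepFun.indepFun_finset S₁ S₂ hd S.h_indep hfmeas
  have hmem₁ : ∀ i : Fin n, (Sum.inl (i:ℕ) : ℕ ⊕ ℕ × ℕ) ∈ S₁ := fun i =>
    Finset.mem_image.2 ⟨i, Finset.mem_univ _, rfl⟩
  have hmem₂ : ∀ p : Fin n × Fin n, (Sum.inr ((p.1:ℕ),(p.2:ℕ)) : ℕ ⊕ ℕ × ℕ) ∈ S₂ := fun p =>
    Finset.mem_image.2 ⟨p, Finset.mem_univ _, rfl⟩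
  have hφ₁ : Measurable (fun (v : (i : S₁) → ℝ) (i : Fin n) => v ⟨Sum.inl (i:ℕ), hmem₁ i⟩) :=
    measurable_pi_lambda _ fun i => measurable_pi_apply _
  have hφ₂ : Measurable (fun (v : (i : S₂) → ℝ) (p : Fin n × Fin n) =>
      v ⟨Sum.inr ((p.1:ℕ),(p.2:ℕ)), hmem₂ p⟩) :=
    measurable_pi_lambda _ fun p => measurable_pi_apply _
  have hcomp := hgrp.comp hφ₁ hφ₂
  have hindep : IndepFun (fun ω (i : Fin n) => S.q i ω)
      (fun ω (p : Fin n × Fin n) => S.ξ p.1 p.2 ω) S.P := hcomp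
  rw [(indepFun_iff_map_prod_eq_prod_map_map (measurable_X S n).aemeasurable
    (measurable_Y S n).aemeasurable).mp hindep, hXlaw, hYlaw]


lemma conc (a b : ℝ) (ha : 0 < a) (hb1 : b < 1)
    (hab : ∀ x ∈ S.suppSet, a ≤ x ∧ x ≤ b)
    (n : ℕ) (hn : 0 < n)
    (h1 : ∀ k l, 0 ≤ 1 + S.M k l / Real.sqrt n)
    (h2 : ∀ k l, b * b * (1 + S.M k l / Real.sqrt n) ≤ 1)
    {ε : ℝ} (hε : 0 < ε) (hε1 : ε ≤ 1) :
    S.P {ω | ∃ i : Fin n, ε * n ≤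
        |S.deg n ω i - ∑ j ∈ Finset.univ.erase i, S.Pber n i j ω|}
      ≤ n * ENNReal.ofReal (2 * Real.exp (-(ε ^ 2 * n) / 4)) := by
  classical
  haveI : Nonempty (Fin n) := Fin.pos_iff_nonempty.mp hn
  haveI : IsProbabilityMeasure S.P := S.hP
  set pr : Fin n → Fin n → Fin n × Fin n :=
    fun i j => if (i:ℕ) < (j:ℕ) then (i,j) else (j,i) with hpr
  set pp : (Fin n → ℝ) → Fin n → Fin n → ℝ :=
    fun x i j => x i * x j * (1 + S.M (S.g i) (S.g j) / Real.sqrt n) with hpp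
  set G : Fin n → ((Fin n → ℝ) × (Fin n × Fin n → ℝ)) → ℝ :=
    fun i z => ∑ j ∈ Finset.univ.erase i,
      ((if z.2 (pr i j) ≤ pp z.1 i j then (1:ℝ) else 0) - pp z.1 i j) with hG
  have psymm : ∀ (x : Fin n → ℝ) (i j : Fin n), pp x j i = pp x i j := by
    intro x i j
    have hM : S.M (S.g (j:ℕ)) (S.g (i:ℕ)) = S.M (S.g (i:ℕ)) (S.g (j:ℕ)) := S.hM_symm.apply _ _
    simp only [hpp]
    rw [hM]
    ring
  -- pointwise identity
  have key : ∀ (ω : Ω) (i : Fin n),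
      S.deg n ω i - ∑ j ∈ Finset.univ.erase i, S.Pber n i j ω
        = G i ((fun k : Fin n => S.q k ω), (fun p : Fin n × Fin n => S.ξ p.1 p.2 ω)) := by
    intro ω i
    have hdeg : S.deg n ω i = ∑ j ∈ Finset.univ.erase i, S.A n ω i j := by
      rw [DCSBM.deg, ← Finset.sum_erase_add _ _ (Finset.mem_univ i)]
      have h0 : S.A n ω i i = 0 := by simp [DCSBM.A]
      rw [h0, add_zero]
    rw [hdeg, hG, ← Finset.sum_sub_distrib]
    apply Finset.sum_congr rfl
    intro j hj
    have hji : j ≠ i := Finset.ne_of_mem_erase hj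
    have hppx : pp (fun k : Fin n => S.q k ω) i j = S.Pber n i j ω := rfl
    rw [hppx]
    congr 1
    have hne : (i:ℕ) ≠ (j:ℕ) := fun h => hji (Fin.val_injective h.symm)
    rcases hne.lt_or_gt with hlt | hlt
    · simp only [DCSBM.A, Matrix.of_apply, if_pos hlt, hpr]
    · have hnlt : ¬ (i:ℕ) < (j:ℕ) := not_lt.mpr hlt.le
      simp only [DCSBM.A, Matrix.of_apply, if_neg hnlt, if_pos hlt, hpr]
      have hth : S.Pber n (j:ℕ) (i:ℕ) ω = S.Pber n (i:ℕ) (j:ℕ) ω := by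
        have := psymm (fun k : Fin n => S.q k ω) i j
        rw [hppx] at this
        exact this
      rw [hth]
  -- packaging
  set V : Ω → (Fin n → ℝ) × (Fin n × Fin n → ℝ) :=
    fun ω => ((fun k : Fin n => S.q k ω), (fun p : Fin n × Fin n => S.ξ p.1 p.2 ω)) with hV
  have hVmeas : Measurable V := (measurable_X S n).prodMk (measurable_Y S n)
  have hGmeas : ∀ i, Measurable (G i) := by
    intro i
    apply Finset.measurable_sum
    intro j _
    apply Measurable.sub
    · apply Measurable.ite _ measurable_const measurable_const
      apply measurableSet_le
      · exact (measurable_pi_apply (pr i j)).comp measurable_snd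
      · exact (((measurable_pi_apply i).comp measurable_fst).mul
          ((measurable_pi_apply j).comp measurable_fst)).mul measurable_const
    · exact (((measurable_pi_apply i).comp measurable_fst).mul
        ((measurable_pi_apply j).comp measurable_fst)).mul measurable_const
  set B : Set ((Fin n → ℝ) × (Fin n × Fin n → ℝ)) :=
    {z | ∃ i : Fin n, ε * n ≤ |G i z|} with hB
  have hBmeas : MeasurableSet B := by
    have hBeq : B = ⋃ i : Fin n, {z | ε * n ≤ |G i z|} := by
      ext z; simp [hB]
    rw [hBeq]
    exact MeasurableSet.iUnion fun i => measurableSet_le measurable_const (hGmeas i).abs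
  have hset : {ω | ∃ i : Fin n, ε * n ≤
      |S.deg n ω i - ∑ j ∈ Finset.univ.erase i, S.Pber n i j ω|} = V ⁻¹' B := by
    ext ω
    simp only [Set.mem_setOf_eq, Set.mem_preimage, hB]
    constructor
    · rintro ⟨i, hi⟩; exact ⟨i, (key ω i) ▸ hi⟩
    · rintro ⟨i, hi⟩; exact ⟨i, (key ω i) ▸ hi⟩
  rw [hset, ← Measure.map_apply hVmeas hBmeas]
  have hjoint := jointLaw S n hn
  rw [show S.P.map V = S.P.map (fun ω =>
      ((fun i : Fin n => S.q i ω), (fun p : Fin n × Fin n => S.ξ p.1 p.2 ω))) from rfl, hjoint,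
    Measure.prod_apply hBmeas]
  set bound : ℝ≥0∞ := ENNReal.ofReal (2 * Real.exp (-(ε ^ 2 * n) / 4)) with hbound
  have hslice : ∀ᵐ x ∂(Measure.pi fun _ : Fin n => S.μ),
      (Measure.pi fun _ : Fin n × Fin n => unif) (Prod.mk x ⁻¹' B) ≤ n * bound := by
    haveI := S.hμ_prob
    have hxs : ∀ᵐ x ∂(Measure.pi fun _ : Fin n => S.μ), ∀ i : Fin n, x i ∈ S.suppSet := by
      rw [ae_all_iff]
      intro i
      have : {x : Fin n → ℝ | ¬ x i ∈ S.suppSet}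
          = (fun x : Fin n → ℝ => x i) ⁻¹' S.suppSetᶜ := rfl
      rw [ae_iff, this]
      exact Measure.pi_eval_preimage_null _ S.h_supp_full
    filter_upwards [hxs] with x hx
    have hppb : ∀ i j : Fin n, 0 ≤ pp x i j ∧ pp x i j ≤ 1 := by
      intro i j
      have hxi := hab _ (hx i)
      have hxj := hab _ (hx j)
      have h0i : 0 ≤ x i := ha.le.trans hxi.1
      have h0j : 0 ≤ x j := ha.le.trans hxj.1
      constructor
      · exact mul_nonneg (mul_nonneg h0i h0j) (h1 _ _)
      · calc pp x i j = x i * x j * (1 + S.M (S.g i) (S.g j) / Real.sqrt n) := rfl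
          _ ≤ b * b * (1 + S.M (S.g i) (S.g j) / Real.sqrt n) := by
              apply mul_le_mul_of_nonneg_right _ (h1 _ _)
              exact mul_le_mul hxi.2 hxj.2 h0j (ha.le.trans (hxi.1.trans hxi.2))
          _ ≤ 1 := h2 _ _
    have hsub : Prod.mk x ⁻¹' B ⊆ ⋃ i : Fin n, {y | ε * n ≤ |G i (x, y)|} := by
      intro y hy
      obtain ⟨i, hi⟩ := hy
      exact Set.mem_iUnion.2 ⟨i, hi⟩
    calc (Measure.pi fun _ : Fin n × Fin n => unif) (Prod.mk x ⁻¹' B)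
        ≤ (Measure.pi fun _ : Fin n × Fin n => unif) (⋃ i : Fin n, {y | ε * n ≤ |G i (x, y)|}) :=
          measure_mono hsub
      _ ≤ ∑ i : Fin n, (Measure.pi fun _ : Fin n × Fin n => unif) {y | ε * n ≤ |G i (x, y)|} :=
          measure_iUnion_fintype_le _ _
      _ ≤ ∑ _i : Fin n, bound := by
          apply Finset.sum_le_sum
          intro i _
          -- Chernoff for the i-th row
          set W : Fin n → (Fin n × Fin n → ℝ) → ℝ :=
            fun j y => (if y (pr i j) ≤ pp x i j then (1:ℝ) else 0) - pp x i j with hW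
          have hcinj : Function.Injective (fun j : Fin n => pr i j) := by
            intro j j' hjj
            simp only [hpr] at hjj
            by_cases hc1 : (i:ℕ) < (j:ℕ) <;> by_cases hc2 : (i:ℕ) < (j':ℕ)
            · rw [if_pos hc1, if_pos hc2] at hjj
              simp only [Prod.mk.injEq] at hjj
              exact hjj.2
            · rw [if_pos hc1, if_neg hc2] at hjj
              simp only [Prod.mk.injEq] at hjj
              obtain ⟨e1, e2⟩ := hjj
              exfalso; rw [e2] at hc1; exact lt_irrefl _ hc1
            · rw [if_neg hc1, if_pos hc2] at hjj
              simp only [Prod.mk.injEq] at hjj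
              obtain ⟨e1, e2⟩ := hjj
              exfalso; rw [← e2] at hc2; exact lt_irrefl _ hc2
            · rw [if_neg hc1, if_neg hc2] at hjj
              simp only [Prod.mk.injEq] at hjj
              exact hjj.1
          have hgmeas : ∀ j : Fin n, Measurable
              (fun t : ℝ => (if t ≤ pp x i j then (1:ℝ) else 0) - pp x i j) := by
            intro j
            exact (Measurable.ite measurableSet_Iic measurable_const measurable_const).sub
              measurable_const
          have hWind : iIndepFun W
              (Measure.pi fun _ : Fin n × Fin n => unif) := by
            have he := iIndepFun_eval_pi (fun _ : Fin n × Fin n => unif)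
            have hre := iIndepFun_comp_right (fun j : Fin n => pr i j) hcinj he
            exact hre.comp _ hgmeas
          have hWmeas : ∀ j, Measurable (W j) := fun j =>
            (hgmeas j).comp (measurable_pi_apply (pr i j))
          have hWb : ∀ j ∈ Finset.univ.erase i, ∀ y, |W j y| ≤ 1 := by
            intro j _ y
            obtain ⟨hp0, hp1⟩ := hppb i j
            simp only [hW]
            split_ifs with hcc
            · rw [abs_le]; constructor <;> linarith
            · rw [abs_le]; constructor <;> linarith
          have hW0 : ∀ j ∈ Finset.univ.erase i,
              ∫ y, W j y ∂(Measure.pi fun _ : Fin n × Fin n => unif) = 0 := by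
            intro j _
            obtain ⟨hp0, hp1⟩ := hppb i j
            have hsmeas : MeasurableSet
                ((fun y : Fin n × Fin n → ℝ => y (pr i j)) ⁻¹' Set.Iic (pp x i j)) :=
              measurable_pi_apply _ measurableSet_Iic
            have hind_eq : (fun y : Fin n × Fin n → ℝ =>
                (if y (pr i j) ≤ pp x i j then (1:ℝ) else 0))
                = Set.indicator ((fun y : Fin n × Fin n → ℝ => y (pr i j)) ⁻¹'
                    Set.Iic (pp x i j)) (fun _ => (1:ℝ)) := by
              funext y
              by_cases hcc : y (pr i j) ≤ pp x i j
              · have hmem : y ∈ ((fun y : Fin n × Fin n → ℝ => y (pr i j)) ⁻¹'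
                    Set.Iic (pp x i j)) := hcc
                rw [if_pos hcc, Set.indicator_of_mem hmem]
              · have hmem : y ∉ ((fun y : Fin n × Fin n → ℝ => y (pr i j)) ⁻¹'
                    Set.Iic (pp x i j)) := hcc
                rw [if_neg hcc, Set.indicator_of_notMem hmem]
            have hIint : ∫ y, (if y (pr i j) ≤ pp x i j then (1:ℝ) else 0)
                ∂(Measure.pi fun _ : Fin n × Fin n => unif) = pp x i j := by
              rw [hind_eq, integral_indicator_const _ hsmeas, measureReal_def,
                pi_eval_preimage _ _ measurableSet_Iic, unif_Iic hp0 hp1]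
              simp [ENNReal.toReal_ofReal hp0]
            have hIintg : Integrable (fun y : Fin n × Fin n → ℝ =>
                (if y (pr i j) ≤ pp x i j then (1:ℝ) else 0))
                (Measure.pi fun _ : Fin n × Fin n => unif) := by
              rw [hind_eq]
              exact (integrable_const (1:ℝ)).indicator hsmeas
            simp only [hW]
            rw [integral_sub hIintg (integrable_const _), hIint, integral_const]
            simp
          have hcard : (Finset.univ.erase i).card ≤ n := by
            calc (Finset.univ.erase i).card ≤ Finset.univ.card := Finset.card_erase_le
              _ = n := by simp
          have hch := chernoff_sum hWind hWmeas (Finset.univ.erase i) hWb hW0 hε hε1 hcard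
          have hGsum : ∀ y, G i (x, y) = ∑ j ∈ Finset.univ.erase i, W j y := fun y => rfl
          have hseteq : {y : Fin n × Fin n → ℝ | ε * n ≤ |G i (x, y)|}
              = {y | ε * n ≤ |∑ j ∈ Finset.univ.erase i, W j y|} := by
            ext y
            simp only [Set.mem_setOf_eq]
            exact Iff.rfl
          rw [hseteq]
          exact hch
      _ = n * bound := by
          rw [Finset.sum_const, Finset.card_univ, Fintype.card_fin, nsmul_eq_mul]
  calc ∫⁻ x, (Measure.pi fun _ : Fin n × Fin n => unif) (Prod.mk x ⁻¹' B)
        ∂(Measure.pi fun _ : Fin n => S.μ)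
      ≤ ∫⁻ _x, (n * bound) ∂(Measure.pi fun _ : Fin n => S.μ) := lintegral_mono_ae hslice
    _ = n * bound := by
        haveI := S.hμ_prob
        rw [lintegral_const, measure_univ, mul_one]


lemma supp_bounds : ∃ a b : ℝ, 0 < a ∧ 0 < b ∧ b < 1 ∧ ∀ x ∈ S.suppSet, a ≤ x ∧ x ≤ b := by
  haveI := S.hμ_prob
  have hne : S.suppSet.Nonempty := by
    by_contra h
    rw [Set.not_nonempty_iff_eq_empty] at h
    have hfull := S.h_supp_full
    rw [h, Set.compl_empty] at hfull
    simp at hfull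
  have hbb : BddBelow S.suppSet := S.h_supp_compact.bddBelow
  have hba : BddAbove S.suppSet := S.h_supp_compact.bddAbove
  have hinf : sInf S.suppSet ∈ S.suppSet := S.h_supp_compact.sInf_mem hne
  have hsup : sSup S.suppSet ∈ S.suppSet := S.h_supp_compact.sSup_mem hne
  refine ⟨sInf S.suppSet, sSup S.suppSet, (S.h_supp_sub hinf).1, (S.h_supp_sub hsup).1,
    (S.h_supp_sub hsup).2, fun x hx => ⟨csInf_le hbb hx, le_csSup hba hx⟩⟩

lemma Mbound : ∃ C : ℝ, 0 ≤ C ∧ ∀ k l, |S.M k l| ≤ C := by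
  refine ⟨∑ k, ∑ l, |S.M k l|, Finset.sum_nonneg fun k _ =>
    Finset.sum_nonneg fun l _ => abs_nonneg _, fun k l => ?_⟩
  calc |S.M k l| ≤ ∑ l', |S.M k l'| :=
        Finset.single_le_sum (f := fun l' => |S.M k l'|) (fun l' _ => abs_nonneg _)
          (Finset.mem_univ l)
    _ ≤ ∑ k', ∑ l', |S.M k' l'| :=
        Finset.single_le_sum (f := fun k' => ∑ l', |S.M k' l'|)
          (fun k' _ => Finset.sum_nonneg fun l' _ => abs_nonneg _) (Finset.mem_univ k)

lemma sqrt_real_tendsto : Tendsto Real.sqrt atTop atTop := by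
  have h := tendsto_rpow_atTop (y := (1/2 : ℝ)) (by norm_num)
  apply Tendsto.congr' _ h
  filter_upwards [eventually_ge_atTop (0:ℝ)] with x _
  exact (Real.sqrt_eq_rpow x).symm

lemma sqrt_nat_tendsto : Tendsto (fun n : ℕ => Real.sqrt n) atTop atTop :=
  (sqrt_real_tendsto).comp tendsto_natCast_atTop_atTop

lemma bc (a b : ℝ) (ha : 0 < a) (hb0 : 0 < b) (hb1 : b < 1)
    (hab : ∀ x ∈ S.suppSet, a ≤ x ∧ x ≤ b)
    {ε : ℝ} (hε : 0 < ε) (hε1 : ε ≤ 1) :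
    ∀ᵐ ω ∂S.P, ∀ᶠ n : ℕ in atTop, ∀ i : Fin n,
      |S.deg n ω i - ∑ j ∈ Finset.univ.erase i, S.Pber n i j ω| < ε * n := by
  classical
  haveI : IsProbabilityMeasure S.P := S.hP
  obtain ⟨C, hC0, hC⟩ := Mbound S
  have hbbpos : 0 < b * b := mul_pos hb0 hb0
  have hδpos : 0 < min 1 ((1 - b * b) / (b * b)) := by
    apply lt_min one_pos
    apply div_pos _ hbbpos
    nlinarith
  have hCto : Tendsto (fun n : ℕ => C / Real.sqrt n) atTop (nhds 0) :=
    Tendsto.div_atTop tendsto_const_nhds (sqrt_nat_tendsto)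
  have hcond : ∀ᶠ n : ℕ in atTop, 0 < n ∧ (∀ k l, 0 ≤ 1 + S.M k l / Real.sqrt n)
      ∧ (∀ k l, b * b * (1 + S.M k l / Real.sqrt n) ≤ 1) := by
    filter_upwards [hCto.eventually_lt_const hδpos, eventually_gt_atTop 0] with n h1n h2n
    have hsqpos : 0 < Real.sqrt n := Real.sqrt_pos.2 (by exact_mod_cast h2n)
    have hMb : ∀ k l, |S.M k l / Real.sqrt n| ≤ C / Real.sqrt n := by
      intro k l
      rw [abs_div, abs_of_pos hsqpos]
      exact (div_le_div_iff_of_pos_right hsqpos).mpr (hC k l)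
    have hlt1 : C / Real.sqrt n < 1 := lt_of_lt_of_le h1n (min_le_left _ _)
    have hlt2 : C / Real.sqrt n < (1 - b * b) / (b * b) := lt_of_lt_of_le h1n (min_le_right _ _)
    refine ⟨h2n, fun k l => ?_, fun k l => ?_⟩
    · have := (abs_le.mp (hMb k l)).1
      linarith
    · have h3 := (abs_le.mp (hMb k l)).2
      have h4 : b * b * (1 + S.M k l / Real.sqrt n) ≤ b * b * (1 + C / Real.sqrt n) := by
        apply mul_le_mul_of_nonneg_left _ hbbpos.le
        linarith
      have h5 : b * b * (1 + C / Real.sqrt n) < b * b * (1 + (1 - b * b) / (b * b)) := by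
        apply mul_lt_mul_of_pos_left _ hbbpos
        linarith
      have h6 : b * b * (1 + (1 - b * b) / (b * b)) = 1 := by
        field_simp
        ring
      linarith
  obtain ⟨n₀, hn₀⟩ := eventually_atTop.mp hcond
  set bad : ℕ → Set Ω := fun n => {ω | ∃ i : Fin n, ε * n ≤
      |S.deg n ω i - ∑ j ∈ Finset.univ.erase i, S.Pber n i j ω|} with hbad
  set s : ℕ → Set Ω := fun n => if n₀ ≤ n then bad n else ∅ with hs
  obtain ⟨aa, bb, haa, hbb0, hbb1, habb⟩ := supp_bounds S
  have hsum : (∑' n, S.P (s n)) ≠ ∞ := by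
    have hr1 : Real.exp (-(ε ^ 2) / 4) < 1 := Real.exp_lt_one_iff.mpr (by nlinarith)
    have hgsum : Summable (fun n : ℕ => (n : ℝ) * (2 * Real.exp (-(ε ^ 2 * n) / 4))) := by
      have heq : ∀ n : ℕ, (n : ℝ) * (2 * Real.exp (-(ε ^ 2 * n) / 4))
          = 2 * ((n : ℝ) ^ 1 * (Real.exp (-(ε ^ 2) / 4)) ^ n) := by
        intro n
        rw [← Real.exp_nat_mul]
        ring_nf
      have hs2 : Summable (fun n : ℕ => (n : ℝ) ^ 1 * (Real.exp (-(ε ^ 2) / 4)) ^ n) := by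
        apply summable_pow_mul_geometric_of_norm_lt_one
        rw [Real.norm_eq_abs, abs_of_pos (Real.exp_pos _)]
        exact hr1
      exact (funext heq) ▸ (hs2.mul_left 2)
    have hle : ∀ n, S.P (s n) ≤ ENNReal.ofReal ((n : ℝ) * (2 * Real.exp (-(ε ^ 2 * n) / 4))) := by
      intro n
      by_cases hcase : n₀ ≤ n
      · have hsn : s n = bad n := if_pos hcase
        rw [hsn]
        obtain ⟨hpos, hc1, hc2⟩ := hn₀ n hcase
        have hcc := conc S a b ha hb1 hab n hpos hc1 hc2 hε hε1
        rw [hbad]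
        refine hcc.trans ?_
        rw [ENNReal.ofReal_mul (Nat.cast_nonneg n), ENNReal.ofReal_natCast]
      · have hsn : s n = ∅ := if_neg hcase
        rw [hsn]
        simp
    apply ne_top_of_le_ne_top _ (ENNReal.tsum_le_tsum hle)
    rw [← ENNReal.ofReal_tsum_of_nonneg (fun n : ℕ => by positivity) hgsum]
    exact ENNReal.ofReal_ne_top
  have hbcae := ae_eventually_notMem hsum
  filter_upwards [hbcae] with ω hω
  rw [eventually_atTop] at hω ⊢
  obtain ⟨N, hN⟩ := hω
  refine ⟨max N n₀, fun n hn i => ?_⟩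
  have h1 := hN n (le_trans (le_max_left _ _) hn)
  have hsn : s n = bad n := if_pos (le_trans (le_max_right _ _) hn)
  rw [hsn, hbad] at h1
  simp only [Set.mem_setOf_eq, not_exists, not_le] at h1
  exact h1 i

lemma q_mem_supp : ∀ᵐ ω ∂S.P, ∀ i : ℕ, S.q i ω ∈ S.suppSet := by
  rw [ae_all_iff]
  intro i
  have hms : MeasurableSet S.suppSetᶜ :=
    S.h_supp_compact.isClosed.measurableSet.compl
  rw [ae_iff]
  have heq : {ω | ¬ S.q i ω ∈ S.suppSet} = S.q i ⁻¹' S.suppSetᶜ := rfl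
  rw [heq, ← Measure.map_apply (S.hq_meas i) hms, S.h_q_law i]
  exact S.h_supp_full

end DCSBMAux


/-- uniform consistency of the degree-based estimators of the intrinsic
weights: almost surely, `max_{1≤i≤n} |q_i − d_i/√(dᵀ1_n)| → 0`. -/
theorem statement0 {Ω : Type*} [MeasurableSpace Ω] (S : DCSBM Ω) :
    ∀ᵐ ω ∂S.P, Filter.Tendsto
      (fun n : ℕ => ⨆ i : Fin n,
        |S.q i ω - S.deg n ω i / Real.sqrt (∑ j, S.deg n ω j)|)
      Filter.atTop (nhds 0) := by
  classical
  obtain ⟨a, b, ha, hb0, hb1, hab⟩ := DCSBMAux.supp_bounds S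
  obtain ⟨C, hC0, hC⟩ := DCSBMAux.Mbound S
  haveI : IsProbabilityMeasure S.P := S.hP
  have hCto : Tendsto (fun n : ℕ => C / Real.sqrt n) atTop (nhds 0) :=
    Tendsto.div_atTop tendsto_const_nhds (DCSBMAux.sqrt_nat_tendsto)
  have hbck : ∀ k : ℕ, ∀ᵐ ω ∂S.P, ∀ᶠ n : ℕ in atTop, ∀ i : Fin n,
      |S.deg n ω i - ∑ j ∈ Finset.univ.erase i, S.Pber n i j ω|
        < (1 / ((k : ℝ) + 1)) * n := by
    intro k
    apply DCSBMAux.bc S a b ha hb0 hb1 hab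
    · positivity
    · rw [div_le_one (by positivity)]
      linarith [Nat.cast_nonneg (α := ℝ) k]
  filter_upwards [DCSBMAux.q_mem_supp S, ae_all_iff.2 hbck] with ω hωq hωbc
  set Sq : ℕ → ℝ := fun n => ∑ j : Fin n, S.q j ω with hSqdef
  have hq01 : ∀ j : ℕ, a ≤ S.q j ω ∧ S.q j ω ≤ b := fun j => hab _ (hωq j)
  have hq1 : ∀ j : ℕ, 0 ≤ S.q j ω ∧ S.q j ω ≤ 1 := fun j =>
    ⟨ha.le.trans (hq01 j).1, (hq01 j).2.trans hb1.le⟩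
  have hSql : ∀ n : ℕ, a * n ≤ Sq n := by
    intro n
    calc a * n = (Finset.univ : Finset (Fin n)).card • a := by
          rw [Finset.card_univ, Fintype.card_fin, nsmul_eq_mul, mul_comm]
      _ = ∑ _j : Fin n, a := (Finset.sum_const a).symm
      _ ≤ Sq n := Finset.sum_le_sum fun j _ => (hq01 (j : ℕ)).1
  have hSqu : ∀ n : ℕ, Sq n ≤ n := by
    intro n
    calc Sq n ≤ ∑ _j : Fin n, (1:ℝ) := Finset.sum_le_sum fun j _ => (hq1 (j : ℕ)).2
      _ = n := by rw [Finset.sum_const, Finset.card_univ, Fintype.card_fin, nsmul_eq_mul, mul_one]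
  have hAnn : ∀ (n : ℕ) (i j : Fin n), 0 ≤ S.A n ω i j := by
    intro n i j
    simp only [DCSBM.A, Matrix.of_apply]
    split_ifs <;> norm_num
  have hd0 : ∀ (n : ℕ) (i : Fin n), 0 ≤ S.deg n ω i := fun n i =>
    Finset.sum_nonneg fun j _ => hAnn n i j
  -- key uniform estimate
  have hstar : ∀ δ : ℝ, 0 < δ → ∀ᶠ n : ℕ in atTop, ∀ i : Fin n,
      |S.deg n ω i - S.q i ω * Sq n| ≤ δ * n := by
    intro δ hδ
    obtain ⟨k, hk⟩ := exists_nat_one_div_lt (show (0:ℝ) < δ/2 by linarith)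
    have hδ4 : (0:ℝ) < δ/4 := by linarith
    have hCev : ∀ᶠ n : ℕ in atTop, C / Real.sqrt n < δ/4 :=
      hCto.eventually_lt_const hδ4
    have hnev : ∀ᶠ n : ℕ in atTop, (1:ℝ) ≤ (δ/4) * n := by
      have h2 : Tendsto (fun n : ℕ => (δ/4) * (n:ℝ)) atTop atTop :=
        (tendsto_natCast_atTop_atTop).const_mul_atTop hδ4
      exact h2.eventually_ge_atTop 1
    filter_upwards [hωbc k, hCev, hnev, eventually_gt_atTop 0] with n hbcn hCn hnn hpos
    intro i
    have hsqpos : 0 < Real.sqrt n := Real.sqrt_pos.2 (by exact_mod_cast hpos)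
    have hMq : ∀ j : Fin n, |S.Pber n i j ω - S.q i ω * S.q j ω| ≤ C / Real.sqrt n := by
      intro j
      have he : S.Pber n (i:ℕ) (j:ℕ) ω - S.q i ω * S.q j ω
          = (S.q i ω * S.q j ω) * (S.M (S.g i) (S.g j) / Real.sqrt n) := by
        rw [DCSBM.Pber]; ring
      rw [he, abs_mul, abs_div, abs_of_pos hsqpos]
      have h1 : |S.q (i:ℕ) ω * S.q (j:ℕ) ω| ≤ 1 := by
        rw [abs_of_nonneg (mul_nonneg (hq1 (i:ℕ)).1 (hq1 (j:ℕ)).1)]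
        exact mul_le_one₀ (hq1 _).2 (hq1 _).1 (hq1 _).2
      have h2 : |S.M (S.g (i:ℕ)) (S.g (j:ℕ))| / Real.sqrt n ≤ C / Real.sqrt n :=
        (div_le_div_iff_of_pos_right hsqpos).mpr (hC _ _)
      calc |S.q (i:ℕ) ω * S.q (j:ℕ) ω| * (|S.M (S.g (i:ℕ)) (S.g (j:ℕ))| / Real.sqrt n)
          ≤ 1 * (C / Real.sqrt n) := mul_le_mul h1 h2 (by positivity) one_pos.le
        _ = C / Real.sqrt n := one_mul _
    have hqS : S.q (i:ℕ) ω * Sq n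
        = (∑ j ∈ Finset.univ.erase i, S.q (i:ℕ) ω * S.q (j:ℕ) ω)
          + S.q (i:ℕ) ω * S.q (i:ℕ) ω := by
      rw [hSqdef, Finset.mul_sum]
      exact (Finset.sum_erase_add _ _ (Finset.mem_univ i)).symm
    have hPdiff : |(∑ j ∈ Finset.univ.erase i, S.Pber n (i:ℕ) (j:ℕ) ω) - S.q (i:ℕ) ω * Sq n|
        ≤ (n:ℝ) * (C / Real.sqrt n) + 1 := by
      rw [hqS]
      have he2 : (∑ j ∈ Finset.univ.erase i, S.Pber n (i:ℕ) (j:ℕ) ω)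
          - ((∑ j ∈ Finset.univ.erase i, S.q (i:ℕ) ω * S.q (j:ℕ) ω)
            + S.q (i:ℕ) ω * S.q (i:ℕ) ω)
          = (∑ j ∈ Finset.univ.erase i, (S.Pber n (i:ℕ) (j:ℕ) ω - S.q (i:ℕ) ω * S.q (j:ℕ) ω))
            - S.q (i:ℕ) ω * S.q (i:ℕ) ω := by
        rw [Finset.sum_sub_distrib]; ring
      rw [he2]
      have t1 : |∑ j ∈ Finset.univ.erase i, (S.Pber n (i:ℕ) (j:ℕ) ω - S.q (i:ℕ) ω * S.q (j:ℕ) ω)|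
          ≤ (n:ℝ) * (C / Real.sqrt n) := by
        refine (Finset.abs_sum_le_sum_abs _ _).trans ?_
        calc ∑ j ∈ Finset.univ.erase i, |S.Pber n (i:ℕ) (j:ℕ) ω - S.q (i:ℕ) ω * S.q (j:ℕ) ω|
            ≤ ∑ _j ∈ Finset.univ.erase i, (C / Real.sqrt n) :=
              Finset.sum_le_sum fun j _ => hMq j
          _ = ((Finset.univ.erase i).card : ℝ) * (C / Real.sqrt n) := by
              rw [Finset.sum_const, nsmul_eq_mul]
          _ ≤ (n:ℝ) * (C / Real.sqrt n) := by
              apply mul_le_mul_of_nonneg_right _ (by positivity)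
              have hcard : (Finset.univ.erase i).card ≤ n := by
                calc (Finset.univ.erase i).card ≤ Finset.univ.card := Finset.card_erase_le
                  _ = n := by simp
              exact_mod_cast hcard
      have t2 : |S.q (i:ℕ) ω * S.q (i:ℕ) ω| ≤ 1 := by
        rw [abs_of_nonneg (mul_nonneg (hq1 _).1 (hq1 _).1)]
        exact mul_le_one₀ (hq1 _).2 (hq1 _).1 (hq1 _).2
      have htri := abs_add_le
        (∑ j ∈ Finset.univ.erase i, (S.Pber n (i:ℕ) (j:ℕ) ω - S.q (i:ℕ) ω * S.q (j:ℕ) ω))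
        (-(S.q (i:ℕ) ω * S.q (i:ℕ) ω))
      rw [← sub_eq_add_neg, abs_neg] at htri
      linarith
    have hbci := hbcn i
    have hkn : (1 / ((k:ℝ) + 1)) * n ≤ (δ/2) * n :=
      mul_le_mul_of_nonneg_right hk.le (Nat.cast_nonneg n)
    have hC4 : (n:ℝ) * (C / Real.sqrt n) ≤ (δ/4) * n := by
      rw [mul_comm]
      exact mul_le_mul_of_nonneg_right hCn.le (Nat.cast_nonneg n)
    calc |S.deg n ω i - S.q (i:ℕ) ω * Sq n|
        ≤ |S.deg n ω i - ∑ j ∈ Finset.univ.erase i, S.Pber n (i:ℕ) (j:ℕ) ω|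
          + |(∑ j ∈ Finset.univ.erase i, S.Pber n (i:ℕ) (j:ℕ) ω) - S.q (i:ℕ) ω * Sq n| :=
          abs_sub_le _ _ _
      _ ≤ δ * n := by linarith
  -- conclusion
  rw [Metric.tendsto_atTop]
  intro η hη
  set δ : ℝ := min (a*a/2) (η*(a*a)/(8*(1+a))) with hδdef
  have hδpos : 0 < δ := lt_min (by positivity) (by positivity)
  have hδ1 : δ ≤ a*a/2 := min_le_left _ _
  have hδ2 : δ ≤ η*(a*a)/(8*(1+a)) := min_le_right _ _
  have hev := (hstar δ hδpos).and (eventually_ge_atTop 1)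
  rw [eventually_atTop] at hev
  obtain ⟨N, hN⟩ := hev
  refine ⟨N, fun n hn => ?_⟩
  obtain ⟨hZ, hn1⟩ := hN n hn
  haveI : Nonempty (Fin n) := Fin.pos_iff_nonempty.mp hn1
  have hnR : (1:ℝ) ≤ n := by exact_mod_cast hn1
  have hnpos : (0:ℝ) < n := by linarith
  show dist (⨆ i : Fin n, |S.q i ω - S.deg n ω i / Real.sqrt (∑ j, S.deg n ω j)|) 0 < η
  set T : ℝ := ∑ j : Fin n, S.deg n ω j with hTdef
  have hT0 : 0 ≤ T := Finset.sum_nonneg fun j _ => hd0 n j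
  have hSq0 : 0 ≤ Sq n := le_trans (by positivity) (hSql n)
  have hTS : |T - Sq n * Sq n| ≤ δ * (n * n) := by
    have he : T - Sq n * Sq n = ∑ i : Fin n, (S.deg n ω i - S.q (i:ℕ) ω * Sq n) := by
      rw [hTdef, Finset.sum_sub_distrib, ← Finset.sum_mul, hSqdef]
    rw [he]
    refine (Finset.abs_sum_le_sum_abs _ _).trans ?_
    calc ∑ i : Fin n, |S.deg n ω i - S.q (i:ℕ) ω * Sq n|
        ≤ ∑ _i : Fin n, (δ * n) := Finset.sum_le_sum fun i _ => hZ i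
      _ = (n:ℝ) * (δ * n) := by
          rw [Finset.sum_const, Finset.card_univ, Fintype.card_fin, nsmul_eq_mul]
      _ = δ * (n * n) := by ring
  have hS1 := hSql n
  have hTlow : a*a/2 * (n*n) ≤ T := by
    have h1 := (abs_le.mp hTS).1
    have hSqsq : (a*(n:ℝ))*(a*n) ≤ Sq n * Sq n :=
      mul_le_mul hS1 hS1 (by positivity) hSq0
    have hdnn : δ*((n:ℝ)*n) ≤ (a*a/2)*(n*n) :=
      mul_le_mul_of_nonneg_right hδ1 (by positivity)
    nlinarith
  have hTpos : 0 < T := lt_of_lt_of_le (by positivity) hTlow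
  have hsqmul : Real.sqrt T * Real.sqrt T = T := Real.mul_self_sqrt hT0
  have hsqdiff : |Real.sqrt T - Sq n| * (a * n) ≤ δ * (n * n) := by
    have hfac : (Real.sqrt T - Sq n) * (Real.sqrt T + Sq n) = T - Sq n * Sq n := by
      linear_combination hsqmul
    have hplus0 : 0 ≤ Real.sqrt T + Sq n := by
      have := Real.sqrt_nonneg T; linarith
    have h1 : |Real.sqrt T - Sq n| * (Real.sqrt T + Sq n) = |T - Sq n * Sq n| := by
      rw [← hfac, abs_mul, abs_of_nonneg hplus0]
    calc |Real.sqrt T - Sq n| * (a * n)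
        ≤ |Real.sqrt T - Sq n| * (Real.sqrt T + Sq n) := by
          apply mul_le_mul_of_nonneg_left _ (abs_nonneg _)
          have := Real.sqrt_nonneg T
          linarith [hS1]
      _ = |T - Sq n * Sq n| := h1
      _ ≤ δ * (n * n) := hTS
  have hdiff2 : |Real.sqrt T - Sq n| ≤ (δ/a) * n := by
    have hden : 0 < a * n := by positivity
    have hid : (δ/a) * n * (a*n) = δ * (n*n) := by field_simp
    rw [← hid] at hsqdiff
    exact le_of_mul_le_mul_right hsqdiff hden
  have hsqlow : a/2 * n ≤ Real.sqrt T := by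
    have h1 := (abs_le.mp hdiff2).1
    have hda : δ/a ≤ a/2 := by
      rw [div_le_iff₀ ha]
      nlinarith
    have h2 : (δ/a) * n ≤ (a/2) * n := mul_le_mul_of_nonneg_right hda hnpos.le
    linarith [hS1]
  have hKb : ∀ i : Fin n, |S.q (i:ℕ) ω - S.deg n ω i / Real.sqrt T|
      ≤ 2*δ*(1+a)/(a*a) := by
    intro i
    have hsqTpos : 0 < Real.sqrt T := lt_of_lt_of_le (by positivity) hsqlow
    have hrw : S.q (i:ℕ) ω - S.deg n ω i / Real.sqrt T
        = (S.q (i:ℕ) ω * Real.sqrt T - S.deg n ω i) / Real.sqrt T := by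
      field_simp
    rw [hrw, abs_div, abs_of_pos hsqTpos]
    have hnum : |S.q (i:ℕ) ω * Real.sqrt T - S.deg n ω i| ≤ (δ/a)*n + δ*n := by
      have he : S.q (i:ℕ) ω * Real.sqrt T - S.deg n ω i
          = S.q (i:ℕ) ω * (Real.sqrt T - Sq n) + (S.q (i:ℕ) ω * Sq n - S.deg n ω i) := by
        ring
      rw [he]
      refine (abs_add_le _ _).trans ?_
      have e1 : |S.q (i:ℕ) ω * (Real.sqrt T - Sq n)| ≤ (δ/a)*n := by
        rw [abs_mul]
        have hqabs : |S.q (i:ℕ) ω| ≤ 1 := by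
          rw [abs_of_nonneg (hq1 _).1]; exact (hq1 _).2
        calc |S.q (i:ℕ) ω| * |Real.sqrt T - Sq n| ≤ 1 * |Real.sqrt T - Sq n| :=
              mul_le_mul_of_nonneg_right hqabs (abs_nonneg _)
          _ = |Real.sqrt T - Sq n| := one_mul _
          _ ≤ (δ/a)*n := hdiff2
      have e2 : |S.q (i:ℕ) ω * Sq n - S.deg n ω i| ≤ δ*n := by
        rw [abs_sub_comm]; exact hZ i
      linarith
    calc |S.q (i:ℕ) ω * Real.sqrt T - S.deg n ω i| / Real.sqrt T
        ≤ ((δ/a)*n + δ*n) / (a/2*n) := by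
          apply div_le_div₀ (by positivity) hnum (by positivity) hsqlow
      _ = 2*δ*(1+a)/(a*a) := by field_simp
  have hsup_le : (⨆ i : Fin n, |S.q (i:ℕ) ω - S.deg n ω i / Real.sqrt T|)
      ≤ 2*δ*(1+a)/(a*a) := ciSup_le hKb
  have hsup_nonneg : 0 ≤ ⨆ i : Fin n, |S.q (i:ℕ) ω - S.deg n ω i / Real.sqrt T| := by
    obtain ⟨i0⟩ := (inferInstance : Nonempty (Fin n))
    refine le_trans (abs_nonneg (S.q (i0:ℕ) ω - S.deg n ω i0 / Real.sqrt T)) ?_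
    exact le_ciSup (f := fun i : Fin n => |S.q (i:ℕ) ω - S.deg n ω i / Real.sqrt T|)
      (Set.Finite.bddAbove (Set.finite_range _)) i0
  rw [Real.dist_eq, sub_zero, abs_of_nonneg hsup_nonneg]
  have h1a : (0:ℝ) < 1 + a := by linarith
  have hfin : 2*δ*(1+a)/(a*a) ≤ η/4 := by
    rw [div_le_iff₀ (by positivity)]
    calc 2*δ*(1+a) ≤ 2*(η*(a*a)/(8*(1+a)))*(1+a) := by
          apply mul_le_mul_of_nonneg_right _ h1a.le
          linarith
      _ = η/4*(a*a) := by field_simp; ring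
  linarith

end
end

section
/- Let ν be a Borel probability measure on ℝ with compact support contained in [−R, R], and let m(x) = ∫ (t − x)^{−1} dν(t) denote its Stieltjes transform for real x with |x| > R. If m(−x) = −m(x) for all real x with |x| > R, then ν is symmetric: the pushforward of ν under t ↦ −t equals ν; in particular ν([a,b]) = ν([−b,−a]) for all a ≤ b. -/
open MeasureTheory Filter

noncomputable section

private lemma stmt12_integrable (ρ : Measure ℝ) [IsProbabilityMeasure ρ] {R : ℝ}
    (hae : ∀ᵐ t ∂ρ, t ∈ Set.Icc (-R) R) {g : ℝ → ℝ} (hg : Measurable g) (C : ℝ)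
    (hC : ∀ t ∈ Set.Icc (-R) R, ‖g t‖ ≤ C) : Integrable g ρ :=
  ⟨hg.aestronglyMeasurable,
    HasFiniteIntegral.of_bounded (C := C) (hae.mono fun t ht => hC t ht)⟩

private lemma stmt12_tendsto (ρ : Measure ℝ) [IsProbabilityMeasure ρ] {R : ℝ} (hR : 0 ≤ R)
    (hae : ∀ᵐ t ∂ρ, t ∈ Set.Icc (-R) R) (n : ℕ) :
    Tendsto (fun x : ℝ => ∫ t, -x * (t ^ n * (t - x)⁻¹) ∂ρ) atTop
      (nhds (∫ t, t ^ n ∂ρ)) := by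
  apply tendsto_integral_filter_of_dominated_convergence (fun _ => (1 + R) * R ^ n)
  · filter_upwards with x
    exact (measurable_const.mul ((measurable_id.pow_const n).mul
      ((measurable_id.sub_const x).inv))).aestronglyMeasurable
  · filter_upwards [eventually_ge_atTop (R + 1)] with x hx
    filter_upwards [hae] with t ht
    have ht1 : -R ≤ t := ht.1
    have ht2 : t ≤ R := ht.2
    have habs : |t| ≤ R := abs_le.2 ⟨ht1, ht2⟩
    have hxt0 : (0 : ℝ) < x - t := by linarith
    have hx0 : (0 : ℝ) ≤ x := by linarith
    have h1 : ‖-x * (t ^ n * (t - x)⁻¹)‖ = x * (|t| ^ n * (x - t)⁻¹) := by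
      rw [norm_mul, norm_neg, norm_mul, norm_inv, Real.norm_eq_abs, Real.norm_eq_abs,
        Real.norm_eq_abs, abs_pow, abs_of_nonneg hx0, abs_sub_comm, abs_of_pos hxt0]
    rw [h1]
    have h2 : |t| ^ n ≤ R ^ n := pow_le_pow_left₀ (abs_nonneg t) habs n
    have h3 : x * (x - t)⁻¹ ≤ 1 + R := by
      rw [mul_inv_le_iff₀ hxt0]
      nlinarith
    calc x * (|t| ^ n * (x - t)⁻¹) = (x * (x - t)⁻¹) * |t| ^ n := by ring
      _ ≤ (1 + R) * R ^ n := by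
          apply mul_le_mul h3 h2 (by positivity) (by linarith)
  · exact integrable_const _
  · filter_upwards [hae] with t _
    have key : ∀ x : ℝ, -x * (t ^ n * (t - x)⁻¹) = t ^ n * (x * (x - t)⁻¹) := by
      intro x
      rw [show t - x = -(x - t) by ring, inv_neg]
      ring
    have h5 : Tendsto (fun x : ℝ => 1 + t * (x - t)⁻¹) atTop (nhds 1) := by
      have hsub : Tendsto (fun x : ℝ => x - t) atTop atTop :=
        tendsto_atTop_add_const_right _ (-t) tendsto_id
      have h6 : Tendsto (fun x : ℝ => t * (x - t)⁻¹) atTop (nhds 0) := by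
        simpa using (hsub.inv_tendsto_atTop).const_mul t
      simpa using tendsto_const_nhds.add h6
    have h7 : Tendsto (fun x : ℝ => x * (x - t)⁻¹) atTop (nhds 1) := by
      apply h5.congr'
      filter_upwards [eventually_gt_atTop t] with x hx
      have hne : x - t ≠ 0 := by intro h; rw [sub_eq_zero] at h; exact (lt_irrefl _ (h ▸ hx))
      field_simp
      ring
    have h8 := h7.const_mul (t ^ n)
    simp only [mul_one] at h8
    exact h8.congr fun x => (key x).symm


/-- a compactly supported probability measure on `ℝ` whose Stieltjes
transform satisfies `m(−x) = −m(x)` outside the support is symmetric: the pushforward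
of `ν` under `t ↦ −t` equals `ν`; in particular `ν([a,b]) = ν([−b,−a])` for `a ≤ b`. -/
theorem statement12 (ν : Measure ℝ) [IsProbabilityMeasure ν] (R : ℝ)
    (hsupp : ν (Set.Icc (-R) R)ᶜ = 0)
    (hsym : ∀ x : ℝ, R < |x| →
      ∫ t, (t - (-x))⁻¹ ∂ν = -∫ t, (t - x)⁻¹ ∂ν) :
    Measure.map (fun t : ℝ => -t) ν = ν ∧
    ∀ a b : ℝ, a ≤ b → ν (Set.Icc a b) = ν (Set.Icc (-b) (-a)) := by
  have hmeas_neg : Measurable (fun t : ℝ => -t) := measurable_neg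
  set μ := Measure.map (fun t : ℝ => -t) ν with hμdef
  have hμprob : IsProbabilityMeasure μ := Measure.isProbabilityMeasure_map hmeas_neg.aemeasurable
  have hpre : (fun t : ℝ => -t) ⁻¹' (Set.Icc (-R) R)ᶜ = (Set.Icc (-R) R)ᶜ := by
    ext t
    simp only [Set.mem_preimage, Set.mem_compl_iff, Set.mem_Icc]
    constructor <;>
      · intro h hc; apply h; constructor <;> linarith [hc.1, hc.2]
  have hμsupp : μ (Set.Icc (-R) R)ᶜ = 0 := by
    rw [hμdef, Measure.map_apply hmeas_neg measurableSet_Icc.compl, hpre]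
    exact hsupp
  have haeν : ∀ᵐ t ∂ν, t ∈ Set.Icc (-R) R := by
    rw [ae_iff]; exact hsupp
  have haeμ : ∀ᵐ t ∂μ, t ∈ Set.Icc (-R) R := by
    rw [ae_iff]; exact hμsupp
  have hR : 0 ≤ R := by
    by_contra h
    push_neg at h
    have hempty : Set.Icc (-R) R = ∅ := Set.Icc_eq_empty (by intro hh; linarith)
    have h2 : ν Set.univ = 0 := by
      rw [show (Set.univ : Set ℝ) = (Set.Icc (-R) R)ᶜ by rw [hempty]; simp]
      exact hsupp
    simp at h2
  have hmg : ∀ (n : ℕ) (x : ℝ), Measurable fun t : ℝ => t ^ n * (t - x)⁻¹ :=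
    fun n x => (measurable_id.pow_const n).mul ((measurable_id.sub_const x).inv)
  have hint : ∀ (ρ : Measure ℝ), ∀ _ : IsProbabilityMeasure ρ,
      (∀ᵐ t ∂ρ, t ∈ Set.Icc (-R) R) →
      ∀ (n : ℕ) (x : ℝ), R < |x| → Integrable (fun t : ℝ => t ^ n * (t - x)⁻¹) ρ := by
    intro ρ _ hae n x hx
    apply stmt12_integrable ρ hae (hmg n x) (R ^ n * (|x| - R)⁻¹)
    intro t ht
    have habs : |t| ≤ R := abs_le.2 ⟨ht.1, ht.2⟩
    have hd : |x| - R ≤ |t - x| := by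
      have h9 := abs_sub_abs_le_abs_sub x t
      rw [abs_sub_comm] at h9
      linarith
    have hd0 : (0:ℝ) < |x| - R := by linarith
    rw [norm_mul, norm_inv, Real.norm_eq_abs, Real.norm_eq_abs, abs_pow]
    apply mul_le_mul (pow_le_pow_left₀ (abs_nonneg t) habs n)
      (inv_anti₀ hd0 hd) (by positivity) (by positivity)
  have hintpow : ∀ (ρ : Measure ℝ), ∀ _ : IsProbabilityMeasure ρ,
      (∀ᵐ t ∂ρ, t ∈ Set.Icc (-R) R) →
      ∀ n : ℕ, Integrable (fun t : ℝ => t ^ n) ρ := by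
    intro ρ _ hae n
    apply stmt12_integrable ρ hae (measurable_id.pow_const n) (R ^ n)
    intro t ht
    rw [Real.norm_eq_abs, abs_pow]
    exact pow_le_pow_left₀ (abs_nonneg t) (abs_le.2 ⟨ht.1, ht.2⟩) n
  have hmap : ∀ (g : ℝ → ℝ), Measurable g → ∫ t, g t ∂μ = ∫ t, g (-t) ∂ν := by
    intro g hg
    rw [hμdef, integral_map hmeas_neg.aemeasurable hg.aestronglyMeasurable]
  have hT0 : ∀ x : ℝ, R < |x| → ∫ t, (t - x)⁻¹ ∂μ = ∫ t, (t - x)⁻¹ ∂ν := by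
    intro x hx
    have h1 : ∫ t, (t - x)⁻¹ ∂μ = ∫ t, (-t - x)⁻¹ ∂ν :=
      hmap _ ((measurable_id.sub_const x).inv)
    have h2 : (fun t : ℝ => (-t - x)⁻¹) = fun t : ℝ => -((t - (-x))⁻¹) := by
      funext t
      rw [show -t - x = -(t - (-x)) by ring, inv_neg]
    rw [h1, h2, integral_neg, hsym x hx, neg_neg]
  have hmain : ∀ n : ℕ,
      (∀ x : ℝ, R < |x| → ∫ t, t ^ n * (t - x)⁻¹ ∂μ = ∫ t, t ^ n * (t - x)⁻¹ ∂ν) ∧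
      ∫ t, t ^ n ∂μ = ∫ t, t ^ n ∂ν := by
    intro n
    induction n with
    | zero =>
      refine ⟨fun x hx => by simpa using hT0 x hx, by simp⟩
    | succ n ih =>
      obtain ⟨ihT, ihM⟩ := ih
      have hstep : ∀ (ρ : Measure ℝ), ∀ _ : IsProbabilityMeasure ρ,
          ∀ _ : (∀ᵐ t ∂ρ, t ∈ Set.Icc (-R) R), ∀ x : ℝ, R < |x| →
          ∫ t, t ^ (n+1) * (t - x)⁻¹ ∂ρ
            = (∫ t, t ^ n ∂ρ) + x * ∫ t, t ^ n * (t - x)⁻¹ ∂ρ := by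
        intro ρ hprob hae x hx
        have hae2 : ∀ᵐ t ∂ρ, t ^ (n+1) * (t - x)⁻¹ = t ^ n + x * (t ^ n * (t - x)⁻¹) := by
          filter_upwards [hae] with t ht
          have htx : t - x ≠ 0 := by
            have habs : |t| ≤ R := abs_le.2 ⟨ht.1, ht.2⟩
            intro h
            rw [sub_eq_zero] at h
            rw [h] at habs
            linarith
          field_simp
          ring
        rw [integral_congr_ae hae2, integral_add (hintpow ρ hprob hae n)
          ((hint ρ hprob hae n x hx).const_mul x), integral_const_mul]
      have hT1 : ∀ x : ℝ, R < |x| →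
          ∫ t, t ^ (n+1) * (t - x)⁻¹ ∂μ = ∫ t, t ^ (n+1) * (t - x)⁻¹ ∂ν := by
        intro x hx
        rw [hstep μ hμprob haeμ x hx, hstep ν inferInstance haeν x hx, ihM, ihT x hx]
      refine ⟨hT1, ?_⟩
      have hμlim := stmt12_tendsto μ hR haeμ (n+1)
      have hνlim := stmt12_tendsto ν hR haeν (n+1)
      have heq : (fun x : ℝ => ∫ t, -x * (t ^ (n+1) * (t - x)⁻¹) ∂μ) =ᶠ[atTop]
          (fun x : ℝ => ∫ t, -x * (t ^ (n+1) * (t - x)⁻¹) ∂ν) := by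
        filter_upwards [eventually_gt_atTop R] with x hx
        have hx' : R < |x| := by
          rw [abs_of_pos (lt_of_le_of_lt hR hx)]; exact hx
        rw [integral_const_mul, integral_const_mul, hT1 x hx']
      exact tendsto_nhds_unique (hμlim.congr' heq) hνlim
  have hpoly : ∀ p : Polynomial ℝ, ∫ t, p.eval t ∂μ = ∫ t, p.eval t ∂ν := by
    intro p
    have hev : (fun t : ℝ => p.eval t) = fun t : ℝ => ∑ i ∈ Finset.range (p.natDegree + 1),
        p.coeff i * t ^ i := funext fun t => Polynomial.eval_eq_sum_range (p := p) t
    have hintc : ∀ (ρ : Measure ℝ), ∀ _ : IsProbabilityMeasure ρ,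
        ∀ _ : (∀ᵐ t ∂ρ, t ∈ Set.Icc (-R) R),
        ∫ t, p.eval t ∂ρ = ∑ i ∈ Finset.range (p.natDegree + 1),
          p.coeff i * ∫ t, t ^ i ∂ρ := by
      intro ρ hprob hae
      rw [hev, integral_finset_sum _ fun i _ => (hintpow ρ hprob hae i).const_mul _]
      exact Finset.sum_congr rfl fun i _ => integral_const_mul _ _
    rw [hintc μ hμprob haeμ, hintc ν inferInstance haeν]
    exact Finset.sum_congr rfl fun i _ => by rw [(hmain i).2]
  have hcont : ∀ g : ℝ → ℝ, Continuous g → ∀ C : ℝ, (∀ t, ‖g t‖ ≤ C) →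
      ∫ t, g t ∂μ = ∫ t, g t ∂ν := by
    intro g hg C hC
    have key : ∀ ε : ℝ, 0 < ε → |(∫ t, g t ∂μ) - ∫ t, g t ∂ν| ≤ ε := by
      intro ε hε
      obtain ⟨p, hp⟩ := exists_polynomial_near_of_continuousOn (-R) R g
        hg.continuousOn (ε/2) (by linarith)
      have hclose : ∀ (ρ : Measure ℝ), ∀ _ : IsProbabilityMeasure ρ,
          ∀ _ : (∀ᵐ t ∂ρ, t ∈ Set.Icc (-R) R),
          |(∫ t, g t ∂ρ) - ∫ t, p.eval t ∂ρ| ≤ ε/2 := by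
        intro ρ hprob hae
        obtain ⟨M, hM⟩ := (isCompact_Icc (a := -R) (b := R)).exists_bound_of_continuousOn
          p.continuous.continuousOn
        have hpint : Integrable (fun t => p.eval t) ρ :=
          stmt12_integrable ρ hae p.continuous.measurable M hM
        have hgint : Integrable g ρ :=
          stmt12_integrable ρ hae hg.measurable C fun t _ => hC t
        rw [← integral_sub hgint hpint]
        have hb : ∀ᵐ t ∂ρ, ‖g t - p.eval t‖ ≤ ε/2 := by
          filter_upwards [hae] with t ht
          rw [Real.norm_eq_abs, abs_sub_comm]
          exact le_of_lt (hp t ht)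
        calc |∫ t, g t - p.eval t ∂ρ| ≤ (ε/2) * (ρ Set.univ).toReal :=
              norm_integral_le_of_norm_le_const hb
          _ = ε/2 := by simp
      have h1 := hclose μ hμprob haeμ
      have h2 := hclose ν inferInstance haeν
      have h3 := hpoly p
      calc |(∫ t, g t ∂μ) - ∫ t, g t ∂ν|
          = |((∫ t, g t ∂μ) - ∫ t, p.eval t ∂μ)
              + ((∫ t, p.eval t ∂μ) - ∫ t, p.eval t ∂ν)
              + ((∫ t, p.eval t ∂ν) - ∫ t, g t ∂ν)| := by ring_nf
        _ ≤ |(∫ t, g t ∂μ) - ∫ t, p.eval t ∂μ|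
              + |(∫ t, p.eval t ∂μ) - ∫ t, p.eval t ∂ν|
              + |(∫ t, p.eval t ∂ν) - ∫ t, g t ∂ν| := abs_add_three _ _ _
        _ ≤ ε := by
            rw [h3] at h1
            rw [h3, sub_self, abs_zero, abs_sub_comm (∫ t, p.eval t ∂ν)]
            linarith
    have h0 : |(∫ t, g t ∂μ) - ∫ t, g t ∂ν| ≤ 0 := by
      by_contra h
      push_neg at h
      have := key (|(∫ t, g t ∂μ) - ∫ t, g t ∂ν| / 2) (by linarith)
      linarith
    have := abs_nonpos_iff.mp h0
    linarith [sub_eq_zero.mp this]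
  have hmapeq : μ = ν := by
    apply ext_of_forall_lintegral_eq_of_IsFiniteMeasure
    intro f
    have hfc : Continuous fun t : ℝ => ((f t : NNReal) : ℝ) :=
      NNReal.continuous_coe.comp f.continuous
    obtain ⟨Cd, hCd⟩ := f.bounded
    have hbound : ∀ t : ℝ, ‖((f t : NNReal) : ℝ)‖ ≤ ((f 0 : NNReal) : ℝ) + Cd := by
      intro t
      have := hCd t 0
      rw [NNReal.dist_eq] at this
      rw [Real.norm_eq_abs, abs_of_nonneg (f t).coe_nonneg]
      have h10 := abs_sub_abs_le_abs_sub ((f t : NNReal) : ℝ) ((f 0 : NNReal) : ℝ)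
      rw [abs_of_nonneg (f t).coe_nonneg, abs_of_nonneg (f 0).coe_nonneg] at h10
      linarith
    have hI : ∀ (ρ : Measure ℝ), ∀ _ : IsProbabilityMeasure ρ,
        Integrable (fun t : ℝ => ((f t : NNReal) : ℝ)) ρ := by
      intro ρ hprob
      exact ⟨hfc.measurable.aestronglyMeasurable,
        HasFiniteIntegral.of_bounded (ae_of_all _ hbound)⟩
    rw [lintegral_coe_eq_integral _ (hI μ hμprob), lintegral_coe_eq_integral _ (hI ν inferInstance)]
    rw [hcont _ hfc _ hbound]
  refine ⟨hmapeq, fun a b hab => ?_⟩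
  conv_lhs => rw [← hmapeq]
  rw [hμdef, Measure.map_apply hmeas_neg measurableSet_Icc]
  congr 1
  ext t
  simp only [Set.mem_preimage, Set.mem_Icc]
  constructor <;> intro h <;> constructor <;> linarith [h.1, h.2]

end
end

section
/- (Gaussian Poincaré inequality.) Let X be a standard real Gaussian random variable and let f : ℝ → ℝ be continuously differentiable with f and f′ square-integrable with respect to the standard Gaussian measure. Then Var[f(X)] ≤ E[|f′(X)|²]. -/
open MeasureTheory ProbabilityTheory

noncomputable section

namespace GaussPoincareAux

open Real Set Filter
open scoped NNReal ENNReal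

local notation "γ" => ProbabilityTheory.gaussianReal 0 1
local notation "φ" => ProbabilityTheory.gaussianPDFReal 0 1



lemma phi_eq (x : ℝ) : φ x = (√(2 * π))⁻¹ * rexp (-x ^ 2 / 2) := by
  simp [gaussianPDFReal, NNReal.coe_one]

lemma phi_pos (x : ℝ) : 0 < φ x := gaussianPDFReal_pos 0 1 x one_ne_zero

lemma hasDerivAt_phi (x : ℝ) : HasDerivAt φ (-x * φ x) x := by
  have h1 : HasDerivAt (fun t : ℝ => -t ^ 2 / 2) (-x) x := by
    have := ((hasDerivAt_id x).pow 2).neg.div_const (2 : ℝ)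
    exact this.congr_deriv (by simp only [id_eq]; push_cast; ring)
  have h2 : HasDerivAt (fun t : ℝ => (√(2 * π))⁻¹ * rexp (-t ^ 2 / 2))
      ((√(2 * π))⁻¹ * (rexp (-x ^ 2 / 2) * (-x))) x :=
    ((Real.hasDerivAt_exp _).comp x h1).const_mul _
  have h3 : -x * φ x = (√(2 * π))⁻¹ * (rexp (-x ^ 2 / 2) * -x) := by
    rw [phi_eq]; ring
  have h4 : φ = fun t : ℝ => (√(2 * π))⁻¹ * rexp (-t ^ 2 / 2) := funext phi_eq
  rw [h3, h4]
  exact h2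

lemma gamma_withDensity :
    (γ : Measure ℝ) = volume.withDensity (fun x => ENNReal.ofReal (φ x)) := by
  rw [gaussianReal_of_var_ne_zero 0 one_ne_zero]
  rfl

lemma integral_gauss (g : ℝ → ℝ) : ∫ x, g x ∂γ = ∫ x, g x * φ x := by
  rw [gamma_withDensity]
  have h : (fun x => ENNReal.ofReal (φ x))
      = fun x => ((Real.toNNReal (φ x) : ℝ≥0) : ℝ≥0∞) := rfl
  rw [h, integral_withDensity_eq_integral_smul
    ((measurable_gaussianPDFReal 0 1).real_toNNReal) g]
  congr 1
  ext x
  simp [NNReal.smul_def, Real.coe_toNNReal _ (gaussianPDFReal_nonneg 0 1 x)]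
  ring

lemma integrable_gauss_iff {g : ℝ → ℝ} :
    Integrable g γ ↔ Integrable (fun x => g x * φ x) volume := by
  rw [gamma_withDensity, integrable_withDensity_iff
    ((measurable_gaussianPDFReal 0 1).ennreal_ofReal)
    (ae_of_all _ fun x => ENNReal.ofReal_lt_top)]
  have : (fun x => g x * (ENNReal.ofReal (φ x)).toReal) = fun x => g x * φ x := by
    funext x
    rw [ENNReal.toReal_ofReal (gaussianPDFReal_nonneg 0 1 x)]
  rw [this]

/-- Gaussian integration by parts. -/
lemma gauss_ibp {g g' : ℝ → ℝ} (hg : ∀ x, HasDerivAt g (g' x) x)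
    (h1 : Integrable g γ) (h2 : Integrable g' γ)
    (h3 : Integrable (fun x => x * g x) γ) :
    ∫ x, x * g x ∂γ = ∫ x, g' x ∂γ := by
  rw [integral_gauss, integral_gauss]
  have hder : ∀ x, HasDerivAt (fun y => g y * φ y)
      (g' x * φ x + g x * (-x * φ x)) x :=
    fun x => (hg x).mul (hasDerivAt_phi x)
  have h2' : Integrable (fun x => g' x * φ x) volume := integrable_gauss_iff.mp h2
  have h3' : Integrable (fun x => (x * g x) * φ x) volume := integrable_gauss_iff.mp h3
  have h3'' : Integrable (fun x => g x * (-x * φ x)) volume := by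
    have : (fun x => g x * (-x * φ x)) = fun x => -((x * g x) * φ x) := by
      funext x; ring
    rw [this]
    exact h3'.neg
  have h1' : Integrable (fun x => g x * φ x) volume := integrable_gauss_iff.mp h1
  have h0 : ∫ x, (g' x * φ x + g x * (-x * φ x)) = 0 :=
    integral_eq_zero_of_hasDerivAt_of_integrable hder (h2'.add h3'') h1'
  rw [integral_add h2' h3''] at h0
  have : ∫ x, g x * (-x * φ x) = -∫ x, (x * g x) * φ x := by
    rw [← integral_neg]
    congr 1; funext x; ring
  rw [this] at h0
  linarith

lemma integrable_sq_gauss : Integrable (fun x : ℝ => x ^ 2) γ := by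
  rw [integrable_gauss_iff]
  have hbound : ∀ x : ℝ, ‖x ^ 2 * φ x‖ ≤ 4 * (√(2 * π))⁻¹ * rexp (-(1/4) * x ^ 2) := by
    intro x
    rw [Real.norm_eq_abs, abs_of_nonneg (mul_nonneg (sq_nonneg x) (gaussianPDFReal_nonneg 0 1 x)), phi_eq]
    have h1 : x ^ 2 ≤ 4 * rexp (x ^ 2 / 4) := by
      have := Real.add_one_le_exp (x ^ 2 / 4)
      nlinarith [Real.exp_pos (x ^ 2 / 4)]
    have h2 : (0:ℝ) < (√(2 * π))⁻¹ := by positivity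
    calc x ^ 2 * ((√(2 * π))⁻¹ * rexp (-x ^ 2 / 2))
        ≤ (4 * rexp (x ^ 2 / 4)) * ((√(2 * π))⁻¹ * rexp (-x ^ 2 / 2)) := by
          apply mul_le_mul_of_nonneg_right h1 (by positivity)
      _ = 4 * (√(2 * π))⁻¹ * (rexp (x ^ 2 / 4) * rexp (-x ^ 2 / 2)) := by ring
      _ = 4 * (√(2 * π))⁻¹ * rexp (-(1/4) * x ^ 2) := by
          rw [← Real.exp_add]
          congr 1
          ring
  apply Integrable.mono' (((integrable_exp_neg_mul_sq (by norm_num : (0:ℝ) < 1/4)).const_mul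
    (4 * (√(2 * π))⁻¹)))
  · exact (continuous_pow 2).aestronglyMeasurable.mul
      (measurable_gaussianPDFReal 0 1).aestronglyMeasurable
  · exact ae_of_all _ fun x => by
      simpa [mul_assoc] using hbound x



abbrev mu2 : Measure (ℝ × ℝ) :=
  (ProbabilityTheory.gaussianReal 0 1).prod (ProbabilityTheory.gaussianReal 0 1)
local notation "μ2" => mu2

/-- Rotation by angle θ (a reflection actually, det = -1). -/
def T (θ : ℝ) (p : ℝ × ℝ) : ℝ × ℝ :=
  (sin θ * p.1 + cos θ * p.2, cos θ * p.1 + -sin θ * p.2)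

lemma continuous_T (θ : ℝ) : Continuous (T θ) := by
  unfold T; fun_prop

lemma measurable_T (θ : ℝ) : Measurable (T θ) := (continuous_T θ).measurable

lemma T_invol (θ : ℝ) (p : ℝ × ℝ) : T θ (T θ p) = p := by
  have h := sin_sq_add_cos_sq θ
  unfold T
  ext
  · simp only
    linear_combination p.1 * h
  · simp only
    linear_combination p.2 * h

/-- T θ as a measurable equivalence. -/
def Teq (θ : ℝ) : ℝ × ℝ ≃ᵐ ℝ × ℝ where
  toFun := T θ
  invFun := T θ
  left_inv := T_invol θ
  right_inv := T_invol θ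
  measurable_toFun := measurable_T θ
  measurable_invFun := measurable_T θ

lemma det_T (θ : ℝ) :
    LinearMap.det (Matrix.toLin (Module.Basis.finTwoProd ℝ) (Module.Basis.finTwoProd ℝ)
      !![sin θ, cos θ; cos θ, -sin θ]) = -1 := by
  rw [LinearMap.det_toLin, Matrix.det_fin_two_of]
  linear_combination -sin_sq_add_cos_sq θ

lemma T_eq_lin (θ : ℝ) :
    T θ = ⇑(Matrix.toLin (Module.Basis.finTwoProd ℝ) (Module.Basis.finTwoProd ℝ)
      !![sin θ, cos θ; cos θ, -sin θ]) := by
  funext p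
  rw [Matrix.toLin_finTwoProd_apply]
  rfl

lemma map_T_volume (θ : ℝ) : (volume : Measure (ℝ × ℝ)).map (T θ) = volume := by
  rw [T_eq_lin θ]
  rw [Measure.map_linearMap_addHaar_eq_smul_addHaar volume (by rw [det_T]; norm_num)]
  rw [det_T]
  norm_num

/-- The density of the 2D standard Gaussian. -/
def D : ℝ × ℝ → ℝ≥0∞ := fun p => gaussianPDF 0 1 p.1 * gaussianPDF 0 1 p.2

lemma measurable_D : Measurable D :=
  ((measurable_gaussianPDF 0 1).comp measurable_fst).mul
    ((measurable_gaussianPDF 0 1).comp measurable_snd)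

lemma phi_mul_phi (a b : ℝ) :
    φ a * φ b = (√(2 * π))⁻¹ * (√(2 * π))⁻¹ * rexp (-(a ^ 2 + b ^ 2) / 2) := by
  have ha : φ a = (√(2 * π))⁻¹ * rexp (-a ^ 2 / 2) := by
    simp [gaussianPDFReal, NNReal.coe_one]
  have hb : φ b = (√(2 * π))⁻¹ * rexp (-b ^ 2 / 2) := by
    simp [gaussianPDFReal, NNReal.coe_one]
  rw [ha, hb, show -(a ^ 2 + b ^ 2) / 2 = -a ^ 2 / 2 + -b ^ 2 / 2 by ring, Real.exp_add]
  ring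

lemma D_comp_T (θ : ℝ) (p : ℝ × ℝ) : D (T θ p) = D p := by
  unfold D
  simp only [gaussianPDF_def]
  rw [← ENNReal.ofReal_mul (gaussianPDFReal_nonneg 0 1 _),
      ← ENNReal.ofReal_mul (gaussianPDFReal_nonneg 0 1 _)]
  congr 1
  rw [phi_mul_phi, phi_mul_phi]
  congr 3
  have h := sin_sq_add_cos_sq θ
  unfold T
  simp only
  linear_combination (-(p.1 ^ 2) - p.2 ^ 2) * h

lemma mu2_eq : μ2 = (volume : Measure (ℝ × ℝ)).withDensity D := by
  refine Measure.prod_eq fun s t hs ht => ?_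
  rw [withDensity_apply _ (hs.prod ht), Measure.volume_eq_prod ℝ ℝ,
    ← Measure.prod_restrict s t]
  unfold D
  rw [MeasureTheory.lintegral_prod_mul
    ((measurable_gaussianPDF 0 1).aemeasurable)
    ((measurable_gaussianPDF 0 1).aemeasurable)]
  rw [gaussianReal_of_var_ne_zero 0 one_ne_zero,
    withDensity_apply _ hs, withDensity_apply _ ht]

lemma measurePreserving_T (θ : ℝ) : MeasurePreserving (T θ) μ2 μ2 := by
  refine ⟨measurable_T θ, ?_⟩
  rw [mu2_eq]
  ext A hA
  rw [Measure.map_apply (measurable_T θ) hA,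
    withDensity_apply _ ((measurable_T θ) hA), withDensity_apply _ hA,
    ← lintegral_indicator ((measurable_T θ) hA) D, ← lintegral_indicator hA D]
  have hkey : ∀ p, (T θ ⁻¹' A).indicator D p = A.indicator D (T θ p) := by
    intro p
    by_cases h : T θ p ∈ A
    · rw [Set.indicator_of_mem h, Set.indicator_of_mem (by exact h), D_comp_T]
    · rw [Set.indicator_of_notMem h, Set.indicator_of_notMem (by exact h)]
  calc ∫⁻ p, (T θ ⁻¹' A).indicator D p ∂volume
      = ∫⁻ p, A.indicator D (T θ p) ∂volume := by
        exact lintegral_congr hkey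
    _ = ∫⁻ p, A.indicator D p ∂((volume : Measure (ℝ × ℝ)).map (T θ)) := by
        rw [lintegral_map (measurable_D.indicator hA) (measurable_T θ)]
    _ = ∫⁻ p, A.indicator D p ∂volume := by rw [map_T_volume]

lemma map_fst_mu2 : mu2.map Prod.fst = γ := by
  rw [Measure.map_fst_prod]
  simp

/-- first coordinate of T: the rotated point. -/
def L (θ : ℝ) (p : ℝ × ℝ) : ℝ := sin θ * p.1 + cos θ * p.2

lemma continuous_L (θ : ℝ) : Continuous (L θ) := by unfold L; fun_prop

lemma measurable_L (θ : ℝ) : Measurable (L θ) := (continuous_L θ).measurable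

lemma map_L_mu2 (θ : ℝ) : mu2.map (L θ) = γ := by
  have h : L θ = Prod.fst ∘ T θ := rfl
  rw [h, ← Measure.map_map measurable_fst (measurable_T θ),
    (measurePreserving_T θ).map_eq, map_fst_mu2]

lemma L_T (θ : ℝ) (p : ℝ × ℝ) : L θ (T θ p) = p.1 := congrArg Prod.fst (T_invol θ p)

lemma M_T (θ : ℝ) (p : ℝ × ℝ) : (T θ (T θ p)).2 = p.2 := congrArg Prod.snd (T_invol θ p)

/-- transfer integral along L. -/
lemma integral_comp_L (θ : ℝ) {g : ℝ → ℝ} (hg : AEStronglyMeasurable g γ) :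
    ∫ p, g (L θ p) ∂μ2 = ∫ x, g x ∂γ := by
  rw [← map_L_mu2 θ] at hg ⊢
  rw [integral_map (measurable_L θ).aemeasurable hg]

lemma integrable_comp_L (θ : ℝ) {g : ℝ → ℝ} (hg : AEStronglyMeasurable g γ)
    (h : Integrable g γ) : Integrable (fun p => g (L θ p)) μ2 := by
  rw [← map_L_mu2 θ] at hg h
  exact (integrable_map_measure hg (measurable_L θ).aemeasurable).mp h

lemma integral_comp_fst {g : ℝ → ℝ} (hg : AEStronglyMeasurable g γ) :
    ∫ p : ℝ × ℝ, g p.1 ∂μ2 = ∫ x, g x ∂γ := by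
  rw [← map_fst_mu2] at hg ⊢
  rw [integral_map measurable_fst.aemeasurable hg]

lemma integrable_comp_fst {g : ℝ → ℝ} (hg : AEStronglyMeasurable g γ)
    (h : Integrable g γ) : Integrable (fun p : ℝ × ℝ => g p.1) μ2 := by
  rw [← map_fst_mu2] at hg h
  exact (integrable_map_measure hg measurable_fst.aemeasurable).mp h

lemma integral_comp_T (θ : ℝ) (g : ℝ × ℝ → ℝ) :
    ∫ p, g (T θ p) ∂μ2 = ∫ p, g p ∂μ2 :=
  (measurePreserving_T θ).integral_comp (Teq θ).measurableEmbedding g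

lemma integrable_comp_T (θ : ℝ) {g : ℝ × ℝ → ℝ} (h : Integrable g μ2) :
    Integrable (fun p => g (T θ p)) μ2 :=
  ((measurePreserving_T θ).integrable_comp_emb (Teq θ).measurableEmbedding).mpr h





lemma integrable_mul_of_sq {α : Type*} [MeasurableSpace α] {m : Measure α} {u v : α → ℝ}
    (hm : AEStronglyMeasurable (fun a => u a * v a) m)
    (hu : Integrable (fun a => u a ^ 2) m) (hv : Integrable (fun a => v a ^ 2) m) :
    Integrable (fun a => u a * v a) m := by
  refine Integrable.mono' (((hu.add hv).const_mul (1/2))) hm (ae_of_all _ fun a => ?_)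
  rw [Real.norm_eq_abs, abs_le]
  simp only [Pi.add_apply]
  constructor
  · nlinarith [sq_nonneg (u a + v a)]
  · nlinarith [sq_nonneg (u a - v a)]

lemma integral_mul_le_of_sq {α : Type*} [MeasurableSpace α] {m : Measure α} {u v : α → ℝ}
    (hm : AEStronglyMeasurable (fun a => u a * v a) m)
    (hu : Integrable (fun a => u a ^ 2) m) (hv : Integrable (fun a => v a ^ 2) m) :
    ∫ a, u a * v a ∂m ≤ (1/2) * ((∫ a, u a ^ 2 ∂m) + ∫ a, v a ^ 2 ∂m) := by
  have h : ∫ a, u a * v a ∂m ≤ ∫ a, (1/2) * (u a ^ 2 + v a ^ 2) ∂m := by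
    apply integral_mono (integrable_mul_of_sq hm hu hv) ((hu.add hv).const_mul (1/2))
    intro a
    simp only [Pi.add_apply]
    nlinarith [sq_nonneg (u a - v a)]
  calc ∫ a, u a * v a ∂m ≤ ∫ a, (1/2) * (u a ^ 2 + v a ^ 2) ∂m := h
    _ = (1/2) * ((∫ a, u a ^ 2 ∂m) + ∫ a, v a ^ 2 ∂m) := by
        rw [integral_const_mul, integral_add hu hv]

/-- The Gaussian Poincaré inequality at the level of the Gaussian measure. -/
theorem gauss_poincare (f : ℝ → ℝ) (hf : ContDiff ℝ 1 f)
    (hf2 : MemLp f 2 γ) (hf'2 : MemLp (deriv f) 2 γ) :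
    (∫ x, f x ^ 2 ∂γ) - (∫ x, f x ∂γ) ^ 2 ≤ ∫ x, (deriv f x) ^ 2 ∂γ := by
  have hfc : Continuous f := hf.continuous
  have hf'c : Continuous (deriv f) := hf.continuous_deriv le_rfl
  have hder : ∀ x, HasDerivAt f (deriv f x) x :=
    fun x => (hf.differentiable one_ne_zero x).hasDerivAt
  have hfsq : Integrable (fun x => f x ^ 2) γ := hf2.integrable_sq
  have hf'sq : Integrable (fun x => deriv f x ^ 2) γ := hf'2.integrable_sq
  have hf1 : Integrable f γ := hf2.integrable one_le_two
  have hf'1 : Integrable (deriv f) γ := hf'2.integrable one_le_two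
  set Q : ℝ := ∫ x, (deriv f x) ^ 2 ∂γ with hQ
  -- integrability over μ2
  have A1 : Integrable (fun p : ℝ × ℝ => f p.1 ^ 2) μ2 :=
    integrable_comp_fst ((hfc.pow 2)).aestronglyMeasurable hfsq
  have A2 : ∀ θ : ℝ, Integrable (fun p : ℝ × ℝ => f (L θ p) ^ 2) μ2 :=
    fun θ => integrable_comp_L θ ((hfc.pow 2)).aestronglyMeasurable hfsq
  have A3 : ∀ θ : ℝ, Integrable (fun p : ℝ × ℝ => deriv f (L θ p) ^ 2) μ2 :=
    fun θ => integrable_comp_L θ ((hf'c.pow 2)).aestronglyMeasurable hf'sq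
  have A4 : Integrable (fun p : ℝ × ℝ => deriv f p.1 ^ 2) μ2 :=
    integrable_comp_fst ((hf'c.pow 2)).aestronglyMeasurable hf'sq
  have A5 : Integrable (fun p : ℝ × ℝ => deriv f p.1 ^ 2 * p.2 ^ 2) μ2 :=
    hf'sq.mul_prod integrable_sq_gauss
  have Asnd : Integrable (fun p : ℝ × ℝ => p.2 ^ 2) μ2 := by
    have h := (show Integrable (fun _ : ℝ => (1:ℝ)) γ from integrable_const 1).mul_prod
      integrable_sq_gauss
    simpa using h
  have A6 : ∀ θ : ℝ, Integrable (fun p : ℝ × ℝ => deriv f (L θ p) ^ 2 * (T θ p).2 ^ 2) μ2 :=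
    fun θ => integrable_comp_T θ A5
  set K : ℝ → ℝ × ℝ → ℝ := fun θ p => f p.1 * (deriv f (L θ p) * (T θ p).2) with hK
  have hLcont2 : Continuous fun q : ℝ × (ℝ × ℝ) => L q.1 q.2 := by
    unfold L; fun_prop
  have hMcont2 : Continuous fun q : ℝ × (ℝ × ℝ) => (T q.1 q.2).2 := by
    show Continuous fun q : ℝ × (ℝ × ℝ) => cos q.1 * q.2.1 + -sin q.1 * q.2.2
    fun_prop
  have hKcont : Continuous fun q : ℝ × (ℝ × ℝ) => K q.1 q.2 :=
    (hfc.comp continuous_snd.fst).mul ((hf'c.comp hLcont2).mul hMcont2)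
  have hKint : ∀ θ : ℝ, Integrable (K θ) μ2 := by
    intro θ
    have hv : Integrable (fun p : ℝ × ℝ => (deriv f (L θ p) * (T θ p).2) ^ 2) μ2 := by
      simpa [mul_pow] using A6 θ
    have hc : Continuous (K θ) := hKcont.comp (continuous_const.prodMk continuous_id)
    have : Integrable (fun p : ℝ × ℝ => f p.1 * (deriv f (L θ p) * (T θ p).2)) μ2 :=
      integrable_mul_of_sq hc.aestronglyMeasurable A1 hv
    exact this
  -- pointwise FTC
  have hL' : ∀ (p : ℝ × ℝ) (θ : ℝ), HasDerivAt (fun t => L t p) ((T θ p).2) θ := by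
    intro p θ
    have h1 : HasDerivAt (fun t : ℝ => sin t * p.1) (cos θ * p.1) θ :=
      (Real.hasDerivAt_sin θ).mul_const p.1
    have h2 : HasDerivAt (fun t : ℝ => cos t * p.2) (-sin θ * p.2) θ :=
      (Real.hasDerivAt_cos θ).mul_const p.2
    exact h1.add h2
  have hKderiv : ∀ (p : ℝ × ℝ) (θ : ℝ),
      HasDerivAt (fun t => f p.1 * f (L t p)) (K θ p) θ := by
    intro p θ
    have h := (((hder (L θ p)).comp θ (hL' p θ)).const_mul (f p.1))
    simpa [hK, Function.comp] using h
  have hFTC : ∀ p : ℝ × ℝ,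
      (∫ θ in (0:ℝ)..(π/2), K θ p) = f p.1 * f p.1 - f p.1 * f p.2 := by
    intro p
    have hcont : Continuous fun θ => K θ p :=
      hKcont.comp (continuous_id.prodMk continuous_const)
    have h := intervalIntegral.integral_eq_sub_of_hasDerivAt
      (f := fun t => f p.1 * f (L t p)) (f' := fun t => K t p)
      (fun θ _ => hKderiv p θ) (hcont.intervalIntegrable 0 (π/2))
    rw [h]
    have hL1 : L (π/2) p = p.1 := by simp [L]
    have hL0 : L 0 p = p.2 := by simp [L]
    show f p.1 * f (L (π/2) p) - f p.1 * f (L 0 p) = _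
    rw [hL1, hL0]
  -- the key per-θ identity
  have hkey : ∀ θ : ℝ, ∫ p, K θ p ∂μ2
      = cos θ * ∫ p, deriv f p.1 * deriv f (L θ p) ∂μ2 := by
    intro θ
    have step1 : ∫ p, K θ p ∂μ2 = ∫ p, f (L θ p) * (deriv f p.1 * p.2) ∂μ2 := by
      rw [← integral_comp_T θ (K θ)]
      refine integral_congr_ae (ae_of_all _ fun p => ?_)
      show K θ (T θ p) = f (L θ p) * (deriv f p.1 * p.2)
      simp only [hK]
      rw [L_T θ p, M_T θ p]
      rfl
    have hint2 : Integrable (fun p : ℝ × ℝ => f (L θ p) * (deriv f p.1 * p.2)) μ2 := by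
      apply integrable_mul_of_sq
      · exact ((hfc.comp (continuous_L θ)).mul
          ((hf'c.comp continuous_fst).mul continuous_snd)).aestronglyMeasurable
      · exact A2 θ
      · simpa [mul_pow] using A5
    have step2 : ∫ p, f (L θ p) * (deriv f p.1 * p.2) ∂μ2
        = ∫ x, (∫ y, f (sin θ * x + cos θ * y) * (deriv f x * y) ∂γ) ∂γ :=
      MeasureTheory.integral_prod _ hint2
    have hae1 : ∀ᵐ x ∂γ, Integrable (fun y => f (sin θ * x + cos θ * y)) γ :=
      (integrable_comp_L θ hfc.aestronglyMeasurable hf1).prod_right_ae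
    have hyf : Integrable (fun p : ℝ × ℝ => p.2 * f (L θ p)) μ2 := by
      apply integrable_mul_of_sq
      · exact (continuous_snd.mul (hfc.comp (continuous_L θ))).aestronglyMeasurable
      · exact Asnd
      · exact A2 θ
    have hae2 : ∀ᵐ x ∂γ, Integrable (fun y => y * f (sin θ * x + cos θ * y)) γ :=
      hyf.prod_right_ae
    have hae3 : ∀ᵐ x ∂γ, Integrable (fun y => deriv f (sin θ * x + cos θ * y)) γ :=
      (integrable_comp_L θ hf'c.aestronglyMeasurable hf'1).prod_right_ae
    have hinner : ∀ᵐ x ∂γ, (∫ y, f (sin θ * x + cos θ * y) * (deriv f x * y) ∂γ)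
        = cos θ * (deriv f x * ∫ y, deriv f (sin θ * x + cos θ * y) ∂γ) := by
      filter_upwards [hae1, hae2, hae3] with x h1 h2 h3
      have hg : ∀ y : ℝ, HasDerivAt (fun y => f (sin θ * x + cos θ * y))
          (deriv f (sin θ * x + cos θ * y) * cos θ) y := by
        intro y
        have hu : HasDerivAt (fun y : ℝ => sin θ * x + cos θ * y) (cos θ) y := by
          simpa using ((hasDerivAt_id y).const_mul (cos θ)).const_add (sin θ * x)
        exact (hder _).comp y hu
      have hibp := gauss_ibp hg h1 (h3.mul_const (cos θ)) h2
      calc ∫ y, f (sin θ * x + cos θ * y) * (deriv f x * y) ∂γ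
          = ∫ y, deriv f x * (y * f (sin θ * x + cos θ * y)) ∂γ := by
            congr 1; funext y; ring
        _ = deriv f x * ∫ y, y * f (sin θ * x + cos θ * y) ∂γ := integral_const_mul _ _
        _ = deriv f x * ∫ y, deriv f (sin θ * x + cos θ * y) * cos θ ∂γ := by rw [hibp]
        _ = deriv f x * ((∫ y, deriv f (sin θ * x + cos θ * y) ∂γ) * cos θ) := by
            rw [integral_mul_const]
        _ = cos θ * (deriv f x * ∫ y, deriv f (sin θ * x + cos θ * y) ∂γ) := by ring
    have hHint : Integrable (fun p : ℝ × ℝ => deriv f p.1 * deriv f (L θ p)) μ2 :=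
      integrable_mul_of_sq
        ((hf'c.comp continuous_fst).mul (hf'c.comp (continuous_L θ))).aestronglyMeasurable
        A4 (A3 θ)
    have step3 : ∫ p, deriv f p.1 * deriv f (L θ p) ∂μ2
        = ∫ x, deriv f x * ∫ y, deriv f (sin θ * x + cos θ * y) ∂γ ∂γ := by
      rw [MeasureTheory.integral_prod _ hHint]
      congr 1
      funext x
      show (∫ y, deriv f x * deriv f (sin θ * x + cos θ * y) ∂γ)
          = deriv f x * ∫ y, deriv f (sin θ * x + cos θ * y) ∂γ
      exact integral_const_mul _ _
    calc ∫ p, K θ p ∂μ2 = ∫ p, f (L θ p) * (deriv f p.1 * p.2) ∂μ2 := step1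
      _ = ∫ x, (∫ y, f (sin θ * x + cos θ * y) * (deriv f x * y) ∂γ) ∂γ := step2
      _ = ∫ x, cos θ * (deriv f x * ∫ y, deriv f (sin θ * x + cos θ * y) ∂γ) ∂γ :=
          integral_congr_ae hinner
      _ = cos θ * ∫ x, deriv f x * ∫ y, deriv f (sin θ * x + cos θ * y) ∂γ ∂γ :=
          integral_const_mul _ _
      _ = cos θ * ∫ p, deriv f p.1 * deriv f (L θ p) ∂μ2 := by rw [step3]
  -- the Cauchy-Schwarz-type bound
  have hHle : ∀ θ : ℝ, ∫ p, deriv f p.1 * deriv f (L θ p) ∂μ2 ≤ Q := by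
    intro θ
    have h := integral_mul_le_of_sq (u := fun p : ℝ × ℝ => deriv f p.1)
      (v := fun p : ℝ × ℝ => deriv f (L θ p))
      ((hf'c.comp continuous_fst).mul (hf'c.comp (continuous_L θ))).aestronglyMeasurable
      A4 (A3 θ)
    have e1 : ∫ p : ℝ × ℝ, deriv f p.1 ^ 2 ∂μ2 = Q :=
      integral_comp_fst ((hf'c.pow 2)).aestronglyMeasurable
    have e2 : ∫ p : ℝ × ℝ, deriv f (L θ p) ^ 2 ∂μ2 = Q :=
      integral_comp_L θ ((hf'c.pow 2)).aestronglyMeasurable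
    rw [e1, e2] at h
    linarith
  -- Fubini setup
  set ν : Measure ℝ := volume.restrict (Ioc (0:ℝ) (π/2)) with hν
  haveI hνfin : IsFiniteMeasure ν := by
    constructor
    rw [hν, Measure.restrict_apply_univ, Real.volume_Ioc]
    exact ENNReal.ofReal_lt_top
  set B : ℝ := (1/2) * ((∫ p : ℝ × ℝ, f p.1 ^ 2 ∂μ2)
      + ∫ p : ℝ × ℝ, deriv f p.1 ^ 2 * p.2 ^ 2 ∂μ2) with hB
  have hGint : ∀ θ : ℝ, ∫ p, ‖K θ p‖ ∂μ2 ≤ B := by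
    intro θ
    have hv : Integrable (fun p : ℝ × ℝ => (deriv f (L θ p) * (T θ p).2) ^ 2) μ2 := by
      simpa [mul_pow] using A6 θ
    have heq : ∫ p : ℝ × ℝ, (deriv f (L θ p) * (T θ p).2) ^ 2 ∂μ2
        = ∫ p : ℝ × ℝ, deriv f p.1 ^ 2 * p.2 ^ 2 ∂μ2 := by
      rw [← integral_comp_T θ (fun p => deriv f p.1 ^ 2 * p.2 ^ 2)]
      refine integral_congr_ae (ae_of_all _ fun p => ?_)
      show (deriv f (L θ p) * (T θ p).2) ^ 2 = deriv f ((T θ p).1) ^ 2 * (T θ p).2 ^ 2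
      rw [mul_pow]
      rfl
    calc ∫ p, ‖K θ p‖ ∂μ2
        ≤ ∫ p, (1/2) * (f p.1 ^ 2 + (deriv f (L θ p) * (T θ p).2) ^ 2) ∂μ2 := by
          apply integral_mono ((hKint θ).norm) ((A1.add hv).const_mul (1/2))
          intro p
          simp only [hK, Real.norm_eq_abs, Pi.add_apply]
          nlinarith [sq_nonneg (|f p.1| - |deriv f (L θ p) * (T θ p).2|),
            sq_abs (f p.1), sq_abs (deriv f (L θ p) * (T θ p).2),
            abs_nonneg (f p.1), abs_nonneg (deriv f (L θ p) * (T θ p).2),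
            abs_mul (f p.1) (deriv f (L θ p) * (T θ p).2)]
      _ = (1/2) * ((∫ p : ℝ × ℝ, f p.1 ^ 2 ∂μ2)
            + ∫ p : ℝ × ℝ, (deriv f (L θ p) * (T θ p).2) ^ 2 ∂μ2) := by
          rw [integral_const_mul, integral_add A1 hv]
      _ = B := by rw [hB, heq]
  have hbig : Integrable (Function.uncurry K) (ν.prod μ2) := by
    have hmeas : AEStronglyMeasurable (Function.uncurry K) (ν.prod μ2) :=
      (show Continuous (Function.uncurry K) from hKcont).aestronglyMeasurable
    rw [integrable_prod_iff hmeas]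
    refine ⟨ae_of_all _ fun θ => hKint θ, ?_⟩
    apply Integrable.mono' (integrable_const B) hmeas.norm.integral_prod_right'
    refine ae_of_all _ fun θ => ?_
    rw [Real.norm_eq_abs, abs_of_nonneg (integral_nonneg fun p => norm_nonneg _)]
    exact hGint θ
  have hswap : ∫ p, (∫ θ, K θ p ∂ν) ∂μ2 = ∫ θ, (∫ p, K θ p ∂μ2) ∂ν :=
    (integral_integral_swap hbig).symm
  -- identify the two sides
  have hLHS : ∫ p, (∫ θ, K θ p ∂ν) ∂μ2 = (∫ x, f x ^ 2 ∂γ) - (∫ x, f x ∂γ) ^ 2 := by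
    have h1 : ∀ p : ℝ × ℝ, (∫ θ, K θ p ∂ν) = f p.1 * f p.1 - f p.1 * f p.2 := by
      intro p
      rw [hν, ← intervalIntegral.integral_of_le (by linarith [Real.pi_pos] : (0:ℝ) ≤ π/2)]
      exact hFTC p
    rw [integral_congr_ae (ae_of_all _ h1)]
    have hi1 : Integrable (fun p : ℝ × ℝ => f p.1 * f p.1) μ2 := by
      simpa [sq] using A1
    have hi2 : Integrable (fun p : ℝ × ℝ => f p.1 * f p.2) μ2 := hf1.mul_prod hf1
    rw [integral_sub hi1 hi2]
    have e1 : ∫ p : ℝ × ℝ, f p.1 * f p.1 ∂μ2 = ∫ x, f x ^ 2 ∂γ := by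
      have := integral_comp_fst (g := fun x => f x * f x)
        (hfc.mul hfc).aestronglyMeasurable
      rw [this]
      congr 1; funext x; ring
    have e2 : ∫ p : ℝ × ℝ, f p.1 * f p.2 ∂μ2 = (∫ x, f x ∂γ) ^ 2 := by
      rw [MeasureTheory.integral_prod_mul f f, sq]
    rw [e1, e2]
  have hg1int : Integrable (fun θ => ∫ p, K θ p ∂μ2) ν := hbig.integral_prod_left
  have hg2int : Integrable (fun θ => cos θ * Q) ν := by
    have : Continuous fun θ : ℝ => cos θ * Q := by fun_prop
    exact this.integrableOn_Ioc
  have hmono : ∫ θ, (∫ p, K θ p ∂μ2) ∂ν ≤ ∫ θ, cos θ * Q ∂ν := by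
    apply integral_mono_ae hg1int hg2int
    rw [hν]
    filter_upwards [ae_restrict_mem measurableSet_Ioc] with θ hθ
    rw [hkey θ]
    apply mul_le_mul_of_nonneg_left (hHle θ)
    apply Real.cos_nonneg_of_mem_Icc
    constructor
    · linarith [hθ.1, Real.pi_pos]
    · exact hθ.2
  have hcosQ : ∫ θ, cos θ * Q ∂ν = Q := by
    rw [hν]
    have h1 : ∫ θ in Ioc (0:ℝ) (π/2), cos θ * Q ∂volume
        = (∫ θ in Ioc (0:ℝ) (π/2), cos θ ∂volume) * Q := integral_mul_const _ _
    rw [h1, ← intervalIntegral.integral_of_le (by linarith [Real.pi_pos] : (0:ℝ) ≤ π/2),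
      integral_cos]
    simp
  calc (∫ x, f x ^ 2 ∂γ) - (∫ x, f x ∂γ) ^ 2
      = ∫ p, (∫ θ, K θ p ∂ν) ∂μ2 := hLHS.symm
    _ = ∫ θ, (∫ p, K θ p ∂μ2) ∂ν := hswap
    _ ≤ ∫ θ, cos θ * Q ∂ν := hmono
    _ = Q := hcosQ


end GaussPoincareAux

/-- Gaussian Poincaré inequality: if `X` is a standard real Gaussian
random variable and `f : ℝ → ℝ` is `C¹` with `f` and `f′` square-integrable against
the standard Gaussian measure, then `Var[f(X)] ≤ E[|f′(X)|²]`. -/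
theorem statement14 {Ωs : Type*} [MeasurableSpace Ωs] (P : Measure Ωs)
    [IsProbabilityMeasure P] (X : Ωs → ℝ) (hX : Measurable X)
    (hlaw : P.map X = gaussianReal 0 1)
    (f : ℝ → ℝ) (hf : ContDiff ℝ 1 f)
    (hf2 : MemLp f 2 (gaussianReal 0 1))
    (hf'2 : MemLp (deriv f) 2 (gaussianReal 0 1)) :
    variance (fun ω => f (X ω)) P ≤ ∫ ω, |deriv f (X ω)| ^ 2 ∂P := by
  have hfc : Continuous f := hf.continuous
  have hf'c : Continuous (deriv f) := hf.continuous_deriv le_rfl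
  have hfm : AEStronglyMeasurable f (P.map X) := by
    rw [hlaw]; exact hfc.aestronglyMeasurable
  have hcomp : MeasureTheory.MemLp (fun ω => f (X ω)) 2 P := by
    have h := (memLp_map_measure_iff hfm hX.aemeasurable).mp (by rwa [hlaw])
    exact h
  rw [ProbabilityTheory.variance_eq_sub hcomp]
  have e1 : (∫ ω, ((fun ω => f (X ω)) ^ 2) ω ∂P) = ∫ x, f x ^ 2 ∂(gaussianReal 0 1) := by
    rw [← hlaw, integral_map hX.aemeasurable
      (by rw [hlaw]; exact (hfc.pow 2).aestronglyMeasurable :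
        AEStronglyMeasurable (fun x => f x ^ 2) (P.map X))]
    simp [Pi.pow_apply]
  have e2 : (∫ ω, f (X ω) ∂P) = ∫ x, f x ∂(gaussianReal 0 1) := by
    rw [← hlaw, integral_map hX.aemeasurable hfm]
  have e3 : (∫ ω, |deriv f (X ω)| ^ 2 ∂P) = ∫ x, (deriv f x) ^ 2 ∂(gaussianReal 0 1) := by
    have h0 : (∫ ω, |deriv f (X ω)| ^ 2 ∂P) = ∫ ω, (deriv f (X ω)) ^ 2 ∂P := by
      simp [sq_abs]
    rw [h0, ← hlaw, integral_map hX.aemeasurable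
      (by rw [hlaw]; exact (hf'c.pow 2).aestronglyMeasurable :
        AEStronglyMeasurable (fun x => (deriv f x) ^ 2) (P.map X))]
  rw [e1, e3]
  have e2' : (∫ ω, ((fun ω => f (X ω))) ω ∂P) = ∫ x, f x ∂(gaussianReal 0 1) := e2
  rw [show (fun ω => f (X ω)) = fun ω => f (X ω) from rfl]
  calc (∫ x, f x ^ 2 ∂(gaussianReal 0 1)) - (∫ ω, f (X ω) ∂P) ^ 2
      = (∫ x, f x ^ 2 ∂(gaussianReal 0 1)) - (∫ x, f x ∂(gaussianReal 0 1)) ^ 2 := by rw [e2]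
    _ ≤ ∫ x, (deriv f x) ^ 2 ∂(gaussianReal 0 1) :=
        GaussPoincareAux.gauss_poincare f hf hf2 hf'2

end
end
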